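/- arXiv:0709.3446 — 6 statements merged into one kernel-verified Lean document; each statement's English description precedes it below -/
import Mathlib

section
/- For every real number a > 0, the integral over (0,∞) of (e^{-x} - (1+x)^{-a})/x with respect to x equals ψ(a); that is, ∫_0^∞ (e^{-x} - (1+x)^{-a}) dx/x = ψ(a). -/
open MeasureTheory Real

namespace DigammaAux

open Set Topology Asymptotics Filter

lemma one_sub_exp_neg_le (y : ℝ) : 1 - Real.exp (-y) ≤ y := by
  nlinarith [Real.add_one_le_exp (-y)]

lemma pair_nonneg {c d x : ℝ} (hcd : c ≤ d) (hx : 0 < x) :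
    0 ≤ (Real.exp (-(c*x)) - Real.exp (-(d*x)))/x := by
  apply div_nonneg _ hx.le
  have h2 : Real.exp (-(d*x)) ≤ Real.exp (-(c*x)) := by
    apply Real.exp_le_exp.2; nlinarith
  linarith

lemma pair_cont {c d : ℝ} :
    ContinuousOn (fun x : ℝ => (Real.exp (-(c*x)) - Real.exp (-(d*x)))/x) (Ioi 0) := by
  apply ContinuousOn.div
  · fun_prop
  · fun_prop
  · intro x hx; exact ne_of_gt hx

lemma pair_integrable {c d : ℝ} (hc : 0 < c) (hcd : c ≤ d) :
    IntegrableOn (fun x : ℝ => (Real.exp (-(c*x)) - Real.exp (-(d*x)))/x) (Ioi 0) := by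
  apply Integrable.mono (((exp_neg_integrableOn_Ioi 0 hc)).const_mul (d - c))
  · exact pair_cont.aestronglyMeasurable measurableSet_Ioi
  · filter_upwards [ae_restrict_mem measurableSet_Ioi] with x hx
    rw [Real.norm_eq_abs, Real.norm_eq_abs, abs_of_nonneg (pair_nonneg hcd hx),
      abs_of_nonneg (by have h3 := sub_nonneg.2 hcd; have h4 := (mem_Ioi.1 hx).le; positivity)]
    rw [div_le_iff₀ hx]
    have h1 : Real.exp (-(c*x)) - Real.exp (-(d*x))
        = Real.exp (-(c*x)) * (1 - Real.exp (-((d-c)*x))) := by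
      rw [mul_sub, mul_one, ← Real.exp_add]; ring_nf
    rw [h1]
    calc Real.exp (-(c*x)) * (1 - Real.exp (-((d-c)*x)))
        ≤ Real.exp (-(c*x)) * ((d-c)*x) :=
          mul_le_mul_of_nonneg_left (one_sub_exp_neg_le _) (Real.exp_pos _).le
      _ = (d - c) * Real.exp (-c * x) * x := by ring_nf

lemma exp_inner_s {c d x : ℝ} (hcd : c ≤ d) (hx : x ≠ 0) :
    ∫ s in Ioc c d, Real.exp (-(s*x)) = (Real.exp (-(c*x)) - Real.exp (-(d*x)))/x := by
  rw [← intervalIntegral.integral_of_le hcd]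
  have key : ∀ s ∈ uIcc c d, HasDerivAt (fun s => -(Real.exp (-(s*x))/x))
      (Real.exp (-(s*x))) s := by
    intro s _
    have h1 : HasDerivAt (fun s : ℝ => -(s*x)) (-x) s := by
      simpa using ((hasDerivAt_id' s).mul_const x).fun_neg
    have h3 := (h1.exp.div_const x).fun_neg
    rw [mul_neg, neg_div, neg_neg, mul_div_assoc, div_self hx, mul_one] at h3
    exact h3
  rw [intervalIntegral.integral_eq_sub_of_hasDerivAt key
    (Continuous.intervalIntegrable (by fun_prop) c d)]
  field_simp
  ring

lemma exp_inner_x {s : ℝ} (hs : 0 < s) :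
    ∫ x in Ioi (0:ℝ), Real.exp (-(s*x)) = 1/s := by
  have := integral_comp_mul_left_Ioi (fun u => Real.exp (-u)) 0 hs
  simp only [mul_zero, integral_exp_neg_Ioi, neg_zero, Real.exp_zero, smul_eq_mul,
    mul_one] at this
  rw [this]
  simp [one_div]

lemma pair_value {c d : ℝ} (hc : 0 < c) (hcd : c ≤ d) :
    ∫ x in Ioi (0:ℝ), (Real.exp (-(c*x)) - Real.exp (-(d*x)))/x
      = Real.log d - Real.log c := by
  have hd : 0 < d := hc.trans_le hcd
  have hGmeas : AEStronglyMeasurable (fun p : ℝ × ℝ => Real.exp (-(p.2 * p.1)))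
      ((volume.restrict (Ioi 0)).prod (volume.restrict (Ioc c d))) :=
    (Continuous.aestronglyMeasurable (by fun_prop))
  have hGint : Integrable (fun p : ℝ × ℝ => Real.exp (-(p.2 * p.1)))
      ((volume.restrict (Ioi 0)).prod (volume.restrict (Ioc c d))) := by
    rw [integrable_prod_iff hGmeas]
    constructor
    · refine Filter.Eventually.of_forall fun x => ?_
      exact (Continuous.integrableOn_Ioc (by fun_prop))
    · apply Integrable.congr (pair_integrable hc hcd)
      filter_upwards [ae_restrict_mem measurableSet_Ioi] with x hx
      rw [← exp_inner_s hcd (ne_of_gt hx)]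
      refine (setIntegral_congr_fun measurableSet_Ioc fun s _ => ?_).symm
      rw [Real.norm_eq_abs, abs_of_pos (Real.exp_pos _)]
  have swap := integral_integral_swap (f := fun x s => Real.exp (-(s*x)))
    (μ := volume.restrict (Ioi 0)) (ν := volume.restrict (Ioc c d)) hGint
  have h1 : ∫ x in Ioi (0:ℝ), ∫ s in Ioc c d, Real.exp (-(s*x))
      = ∫ x in Ioi (0:ℝ), (Real.exp (-(c*x)) - Real.exp (-(d*x)))/x :=
    setIntegral_congr_fun measurableSet_Ioi fun x hx => exp_inner_s hcd (ne_of_gt hx)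
  have h2 : ∫ s in Ioc c d, ∫ x in Ioi (0:ℝ), Real.exp (-(s*x))
      = Real.log d - Real.log c := by
    rw [setIntegral_congr_fun measurableSet_Ioc
      (fun s hs => exp_inner_x (hc.trans_le hs.1.le))]
    rw [← intervalIntegral.integral_of_le hcd, integral_one_div
      (by rw [Set.uIcc_of_le hcd]; intro h; exact absurd h.1 (not_le.2 hc))]
    rw [Real.log_div (ne_of_gt hd) (ne_of_gt hc)]
  rw [← h1, swap, h2]

lemma psi_props {t : ℝ} (ht : 0 < t) :
    IntegrableOn (fun x : ℝ => (Real.exp (-x) - Real.exp (-(t*x)))/x) (Ioi 0) ∧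
    (∫ x in Ioi (0:ℝ), (Real.exp (-x) - Real.exp (-(t*x)))/x = Real.log t) ∧
    (∫ x in Ioi (0:ℝ), |(Real.exp (-x) - Real.exp (-(t*x)))/x| = |Real.log t|) := by
  rcases le_total 1 t with h1 | h1
  · have heq : (fun x : ℝ => (Real.exp (-x) - Real.exp (-(t*x)))/x)
        = fun x : ℝ => (Real.exp (-(1*x)) - Real.exp (-(t*x)))/x := by
      simp only [one_mul]
    have hint := pair_integrable one_pos h1
    have hval := pair_value one_pos h1
    rw [Real.log_one, sub_zero] at hval
    refine ⟨heq ▸ hint, heq ▸ hval, ?_⟩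
    rw [abs_of_nonneg (Real.log_nonneg h1), ← hval]
    refine setIntegral_congr_fun measurableSet_Ioi fun x hx => ?_
    rw [abs_of_nonneg (by simpa using pair_nonneg h1 hx)]
    simp
  · have heq : (fun x : ℝ => (Real.exp (-x) - Real.exp (-(t*x)))/x)
        = fun x : ℝ => -((Real.exp (-(t*x)) - Real.exp (-(1*x)))/x) := by
      funext x; simp only [one_mul]; ring
    have hint := (pair_integrable ht h1).neg
    have hval := pair_value ht h1
    rw [Real.log_one, zero_sub] at hval
    have hval' : ∫ x in Ioi (0:ℝ), -((Real.exp (-(t*x)) - Real.exp (-(1*x)))/x)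
        = Real.log t := by rw [integral_neg, hval, neg_neg]
    refine ⟨heq ▸ hint, heq ▸ hval', ?_⟩
    rw [abs_of_nonpos (Real.log_nonpos ht.le h1)]
    have : ∫ x in Ioi (0:ℝ), |(Real.exp (-x) - Real.exp (-(t*x)))/x|
        = ∫ x in Ioi (0:ℝ), (Real.exp (-(t*x)) - Real.exp (-(1*x)))/x := by
      refine setIntegral_congr_fun measurableSet_Ioi fun x hx => ?_
      have hval0 : (Real.exp (-x) - Real.exp (-(t*x)))/x
          = -((Real.exp (-(t*x)) - Real.exp (-(1*x)))/x) := by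
        simp only [one_mul]; ring
      rw [hval0, abs_neg, abs_of_nonneg (pair_nonneg h1 hx)]
    rw [this, hval]

lemma mellin_log_conv {a : ℝ} (ha : 0 < a) :
    MellinConvergent (fun t => Real.log t • (Real.exp (-t) : ℂ)) (a : ℂ) ∧
      HasDerivAt (mellin fun t => (Real.exp (-t) : ℂ))
        (mellin (fun t => Real.log t • (Real.exp (-t) : ℂ)) (a : ℂ)) (a : ℂ) := by
  refine mellin_hasDerivAt_of_isBigO_rpow (a := a + 1) (b := 0) ?_ ?_ ?_ ?_ ?_
  · refine (Continuous.continuousOn ?_).locallyIntegrableOn measurableSet_Ioi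
    exact Complex.continuous_ofReal.comp (Real.continuous_exp.comp continuous_neg)
  · rw [← isBigO_norm_left]
    simp_rw [Complex.norm_real, isBigO_norm_left]
    simpa only [neg_one_mul] using (isLittleO_exp_neg_mul_rpow_atTop zero_lt_one _).isBigO
  · simpa using lt_add_one a
  · simp_rw [neg_zero, Real.rpow_zero]
    refine isBigO_const_of_tendsto (?_ : Tendsto _ _ (𝓝 (1 : ℂ))) one_ne_zero
    rw [(by simp : (1 : ℂ) = Real.exp (-0))]
    exact (Complex.continuous_ofReal.comp
      (Real.continuous_exp.comp continuous_neg)).continuousWithinAt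
  · simpa using ha

lemma integrable_rpow_log_exp {a : ℝ} (ha : 0 < a) :
    IntegrableOn (fun t : ℝ => t ^ (a-1) * |Real.log t| * Real.exp (-t)) (Ioi 0) := by
  have h := (mellin_log_conv ha).1
  unfold MellinConvergent at h
  have h2 := h.norm
  apply Integrable.congr h2
  filter_upwards [ae_restrict_mem measurableSet_Ioi] with t ht
  rw [norm_smul, norm_smul,
    Complex.norm_cpow_eq_rpow_re_of_pos ht, Complex.norm_real, Real.norm_eq_abs, Real.norm_eq_abs]
  rw [abs_of_pos (Real.exp_pos (-t))]
  simp only [Complex.sub_re, Complex.ofReal_re, Complex.one_re]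
  ring

lemma hasDerivAt_realGamma {a : ℝ} (ha : 0 < a) :
    HasDerivAt Real.Gamma (∫ t in Ioi (0:ℝ), t ^ (a-1) * (Real.log t * Real.exp (-t))) a := by
  have hre : (0:ℝ) < (a : ℂ).re := by simpa using ha
  have hD := Complex.hasDerivAt_GammaIntegral hre
  have heq : Complex.Gamma =ᶠ[𝓝 (a : ℂ)] Complex.GammaIntegral := by
    filter_upwards [(Complex.continuous_re.isOpen_preimage _ isOpen_Ioi).mem_nhds
      (by simpa using ha : (a:ℂ) ∈ Complex.re ⁻¹' Ioi 0)] with s hs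
    exact Complex.Gamma_eq_integral hs
  have hG : HasDerivAt Complex.Gamma
      (∫ t : ℝ in Ioi 0, (t:ℂ) ^ ((a:ℂ) - 1) * (Real.log t * Real.exp (-t))) (a:ℂ) :=
    hD.congr_of_eventuallyEq heq
  have hDr : (∫ t : ℝ in Ioi 0, (t:ℂ) ^ ((a:ℂ) - 1) * (Real.log t * Real.exp (-t)))
      = ((∫ t in Ioi (0:ℝ), t ^ (a-1) * (Real.log t * Real.exp (-t)) : ℝ) : ℂ) := by
    rw [show ((∫ t in Ioi (0:ℝ), t ^ (a-1) * (Real.log t * Real.exp (-t)) : ℝ) : ℂ)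
        = ∫ t in Ioi (0:ℝ), ((t ^ (a-1) * (Real.log t * Real.exp (-t)) : ℝ) : ℂ)
      from integral_ofReal.symm]
    refine setIntegral_congr_fun measurableSet_Ioi fun t ht => ?_
    rw [Complex.ofReal_mul, show ((a:ℂ) - 1) = ((a - 1 : ℝ) : ℂ) by push_cast; ring,
      ← Complex.ofReal_cpow (le_of_lt ht), Complex.ofReal_mul]
  rw [hDr] at hG
  simpa [Complex.Gamma_ofReal] using hG.real_of_complex

lemma aux_int {a r : ℝ} (ha : 0 < a) (hr : 1 ≤ r) :
    IntegrableOn (fun t : ℝ => t ^ (a-1) * Real.exp (-(r*t))) (Ioi 0) := by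
  apply Integrable.mono (Real.GammaIntegral_convergent ha)
  · apply ContinuousOn.aestronglyMeasurable _ measurableSet_Ioi
    apply ContinuousOn.mul _ (by fun_prop)
    intro t ht
    exact (Real.continuousAt_rpow_const t (a-1) (Or.inl (ne_of_gt ht))).continuousWithinAt
  · filter_upwards [ae_restrict_mem measurableSet_Ioi] with t ht
    have h0 : (0:ℝ) ≤ t ^ (a-1) := Real.rpow_nonneg ht.le _
    rw [Real.norm_eq_abs, Real.norm_eq_abs, abs_of_nonneg (by positivity),
      abs_of_nonneg (by positivity)]
    have : Real.exp (-(r*t)) ≤ Real.exp (-t) := by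
      apply Real.exp_le_exp.2; nlinarith [(mem_Ioi.1 ht).le]
    calc t ^ (a-1) * Real.exp (-(r*t)) ≤ t ^ (a-1) * Real.exp (-t) :=
          mul_le_mul_of_nonneg_left this h0
      _ = Real.exp (-t) * t ^ (a-1) := mul_comm _ _

lemma inner_t {a x : ℝ} (ha : 0 < a) (hx : 0 < x) :
    ∫ t in Ioi (0:ℝ), t ^ (a-1) * Real.exp (-t) * ((Real.exp (-x) - Real.exp (-(t*x)))/x)
      = Real.Gamma a * ((Real.exp (-x) - (1+x) ^ (-a))/x) := by
  have h1x : (1:ℝ) < 1 + x := by linarith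
  have heq : ∀ t ∈ Ioi (0:ℝ),
      t ^ (a-1) * Real.exp (-t) * ((Real.exp (-x) - Real.exp (-(t*x)))/x)
      = (Real.exp (-x)/x) * (t ^ (a-1) * Real.exp (-(1*t)))
        - (1/x) * (t ^ (a-1) * Real.exp (-((1+x)*t))) := by
    intro t _
    rw [show (-((1+x)*t)) = -t + -(t*x) by ring, Real.exp_add, show (-(1*t)) = -t by ring]
    ring
  rw [setIntegral_congr_fun measurableSet_Ioi heq]
  rw [integral_sub (((aux_int ha le_rfl).const_mul _))
    (((aux_int ha h1x.le).const_mul _))]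
  rw [integral_const_mul, integral_const_mul,
    integral_rpow_mul_exp_neg_mul_Ioi ha one_pos,
    integral_rpow_mul_exp_neg_mul_Ioi ha (by linarith : (0:ℝ) < 1 + x)]
  have h2 : ((1:ℝ)/(1+x)) ^ a = (1+x) ^ (-a) := by
    rw [one_div, Real.inv_rpow (by linarith : (0:ℝ) ≤ 1+x), ← Real.rpow_neg (by linarith)]
  have h3 : ((1:ℝ)/1) ^ a = 1 := by norm_num
  rw [h2, h3]
  ring

end DigammaAux

/-- The digamma function `ψ(x) = Γ'(x)/Γ(x)`. -/
noncomputable def digamma (x : ℝ) : ℝ := deriv Real.Gamma x / Real.Gamma x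

open Set DigammaAux in
set_option maxHeartbeats 1000000 in
theorem integral_exp_sub_rpow_div_eq_digamma (a : ℝ) (ha : 0 < a) :
    ∫ x in Set.Ioi (0 : ℝ), (Real.exp (-x) - (1 + x) ^ (-a)) / x = digamma a := by
  have hΓpos := Real.Gamma_pos_of_pos ha
  have hFmeas : AEStronglyMeasurable (fun p : ℝ × ℝ =>
      p.1 ^ (a-1) * Real.exp (-p.1) * ((Real.exp (-p.2) - Real.exp (-(p.1*p.2)))/p.2))
      ((volume.restrict (Ioi 0)).prod (volume.restrict (Ioi 0))) := by
    rw [Measure.prod_restrict]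
    apply ContinuousOn.aestronglyMeasurable _ (measurableSet_Ioi.prod measurableSet_Ioi)
    apply ContinuousOn.mul
    · apply ContinuousOn.mul _ (Continuous.continuousOn (by fun_prop))
      intro p hp
      exact ((Real.continuousAt_rpow_const p.1 (a-1)
        (Or.inl (ne_of_gt hp.1))).comp continuousAt_fst).continuousWithinAt
    · apply ContinuousOn.div (Continuous.continuousOn (by fun_prop))
        (Continuous.continuousOn (by fun_prop))
      intro p hp
      exact ne_of_gt hp.2
  have hFint : Integrable (fun p : ℝ × ℝ =>
      p.1 ^ (a-1) * Real.exp (-p.1) * ((Real.exp (-p.2) - Real.exp (-(p.1*p.2)))/p.2))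
      ((volume.restrict (Ioi 0)).prod (volume.restrict (Ioi 0))) := by
    rw [integrable_prod_iff hFmeas]
    constructor
    · filter_upwards [ae_restrict_mem measurableSet_Ioi] with t ht
      exact ((psi_props ht).1.const_mul (t ^ (a-1) * Real.exp (-t)))
    · apply Integrable.congr (integrable_rpow_log_exp ha)
      filter_upwards [ae_restrict_mem measurableSet_Ioi] with t ht
      have hc : (0:ℝ) ≤ t ^ (a-1) * Real.exp (-t) := by
        have := Real.rpow_nonneg ht.le (a-1); positivity
      have heq2 : (fun x : ℝ => ‖t ^ (a-1) * Real.exp (-t)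
            * ((Real.exp (-x) - Real.exp (-(t*x)))/x)‖)
          = fun x : ℝ => (t ^ (a-1) * Real.exp (-t))
            * |(Real.exp (-x) - Real.exp (-(t*x)))/x| := by
        funext x
        rw [Real.norm_eq_abs, abs_mul, abs_of_nonneg hc]
      rw [heq2, integral_const_mul, (psi_props ht).2.2]
      ring
  have swap := integral_integral_swap
    (f := fun t x => t ^ (a-1) * Real.exp (-t) * ((Real.exp (-x) - Real.exp (-(t*x)))/x))
    (μ := volume.restrict (Ioi 0)) (ν := volume.restrict (Ioi 0)) hFint
  have hLHS : (∫ t in Ioi (0:ℝ), ∫ x in Ioi (0:ℝ),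
      t ^ (a-1) * Real.exp (-t) * ((Real.exp (-x) - Real.exp (-(t*x)))/x))
      = ∫ t in Ioi (0:ℝ), t ^ (a-1) * (Real.log t * Real.exp (-t)) := by
    refine setIntegral_congr_fun measurableSet_Ioi fun t ht => ?_
    rw [integral_const_mul, (psi_props ht).2.1]
    ring
  have hRHS : (∫ x in Ioi (0:ℝ), ∫ t in Ioi (0:ℝ),
      t ^ (a-1) * Real.exp (-t) * ((Real.exp (-x) - Real.exp (-(t*x)))/x))
      = Real.Gamma a * ∫ x in Ioi (0:ℝ), (Real.exp (-x) - (1+x) ^ (-a))/x := by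
    rw [← integral_const_mul]
    exact setIntegral_congr_fun measurableSet_Ioi fun x hx => inner_t ha hx
  have key : deriv Real.Gamma a
      = Real.Gamma a * ∫ x in Ioi (0:ℝ), (Real.exp (-x) - (1+x) ^ (-a))/x := by
    rw [(hasDerivAt_realGamma ha).deriv, ← hLHS, swap, hRHS]
  rw [digamma, key]
  field_simp
end

section
/- The integral over (0,∞) of (e^{-x} - 1/(1+x))/x with respect to x equals -γ; that is, ∫_0^∞ (e^{-x} - 1/(1+x)) dx/x = -γ. -/
open MeasureTheory Real Set Filter Topology

lemma my_integrableOn_log_Ioc : IntegrableOn Real.log (Set.Ioc (0:ℝ) 1) := by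
  have h : IntegrableOn (fun x : ℝ ↦ -Real.log x) (Set.Ioc (0:ℝ) 1) := by
    apply intervalIntegral.integrableOn_deriv_of_nonneg
      (g := fun x ↦ x - x * Real.log x)
    · exact (continuous_id.sub Real.continuous_mul_log).continuousOn
    · intro x hx
      have hx0 : x ≠ 0 := hx.1.ne'
      have h1 : HasDerivAt (fun x : ℝ ↦ x - x * Real.log x)
          (1 - (1 * Real.log x + x * x⁻¹)) x :=
        (hasDerivAt_id x).sub ((hasDerivAt_id x).mul (Real.hasDerivAt_log hx0))
      convert h1 using 1
      field_simp
      ring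
    · intro x hx
      simp only [neg_nonneg]
      exact Real.log_nonpos hx.1.le hx.2.le
  have he : Real.log = (-fun x : ℝ ↦ -Real.log x) := by funext x; simp
  rw [IntegrableOn, he]
  exact h.neg

lemma my_meas_exp_mul_log : Measurable (fun x : ℝ ↦ Real.exp (-x) * Real.log x) :=
  (Real.measurable_exp.comp measurable_neg).mul Real.measurable_log

lemma my_integrableOn_exp_mul_log_Ioc :
    IntegrableOn (fun x : ℝ ↦ Real.exp (-x) * Real.log x) (Set.Ioc (0:ℝ) 1) := by
  apply Integrable.mono my_integrableOn_log_Ioc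
    my_meas_exp_mul_log.aestronglyMeasurable.restrict
  filter_upwards [ae_restrict_mem measurableSet_Ioc] with x hx
  rw [norm_mul, Real.norm_eq_abs, Real.norm_eq_abs, abs_exp]
  have : Real.exp (-x) ≤ 1 := Real.exp_le_one_iff.mpr (by linarith [hx.1])
  nlinarith [abs_nonneg (Real.log x), Real.exp_pos (-x)]

lemma my_integrableOn_exp_mul_log_Ioi1 :
    IntegrableOn (fun x : ℝ ↦ Real.exp (-x) * Real.log x) (Set.Ioi (1:ℝ)) := by
  have h2 : IntegrableOn (fun x : ℝ ↦ Real.exp (-x) * x ^ ((2:ℝ) - 1)) (Set.Ioi (0:ℝ)) :=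
    Real.GammaIntegral_convergent (by norm_num : (0:ℝ) < 2)
  apply Integrable.mono (h2.mono_set (Set.Ioi_subset_Ioi zero_le_one))
    my_meas_exp_mul_log.aestronglyMeasurable.restrict
  filter_upwards [ae_restrict_mem measurableSet_Ioi] with x hx
  have hx1 : (1:ℝ) ≤ x := le_of_lt hx
  have hlog : |Real.log x| ≤ x := by
    rw [abs_of_nonneg (Real.log_nonneg hx1)]
    calc Real.log x ≤ x - 1 := Real.log_le_sub_one_of_pos (by linarith)
      _ ≤ x := by linarith
  rw [norm_mul, Real.norm_eq_abs, Real.norm_eq_abs, abs_exp, Real.norm_eq_abs,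
    show ((2:ℝ) - 1) = 1 by norm_num, Real.rpow_one,
    abs_of_nonneg (by positivity : (0:ℝ) ≤ Real.exp (-x) * x)]
  exact mul_le_mul_of_nonneg_left hlog (Real.exp_pos _).le

lemma my_integrableOn_exp_mul_log :
    IntegrableOn (fun x : ℝ ↦ Real.exp (-x) * Real.log x) (Set.Ioi (0:ℝ)) := by
  rw [← Set.Ioc_union_Ioi_eq_Ioi (zero_le_one (α := ℝ)), integrableOn_union]
  exact ⟨my_integrableOn_exp_mul_log_Ioc, my_integrableOn_exp_mul_log_Ioi1⟩

open MeasureTheory Real Set Filter Topology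

lemma my_integral_exp_mul_log :
    ∫ t in Set.Ioi (0:ℝ), Real.exp (-t) * Real.log t = -Real.eulerMascheroniConstant := by
  have h1 : HasDerivAt Complex.GammaIntegral
      (∫ t : ℝ in Set.Ioi 0, (t:ℂ) ^ ((1:ℂ) - 1) * (Real.log t * Real.exp (-t))) 1 :=
    Complex.hasDerivAt_GammaIntegral (by norm_num)
  have hval : (∫ t : ℝ in Set.Ioi 0, (t:ℂ) ^ ((1:ℂ) - 1) * (Real.log t * Real.exp (-t)))
      = ((∫ t in Set.Ioi (0:ℝ), Real.exp (-t) * Real.log t : ℝ) : ℂ) := by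
    have hcast : (∫ t in Set.Ioi (0:ℝ), ((Real.exp (-t) * Real.log t : ℝ) : ℂ))
        = ((∫ t in Set.Ioi (0:ℝ), Real.exp (-t) * Real.log t : ℝ) : ℂ) := integral_ofReal
    rw [← hcast]
    refine setIntegral_congr_fun measurableSet_Ioi fun t ht => ?_
    rw [sub_self, Complex.cpow_zero, one_mul]
    push_cast
    ring
  rw [hval] at h1
  have h2 : HasDerivAt Complex.Gamma
      ((∫ t in Set.Ioi (0:ℝ), Real.exp (-t) * Real.log t : ℝ) : ℂ) 1 := by
    refine h1.congr_of_eventuallyEq ?_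
    have hopen : IsOpen {s : ℂ | 0 < s.re} := isOpen_lt continuous_const Complex.continuous_re
    filter_upwards [hopen.mem_nhds (by norm_num : (0:ℝ) < (1:ℂ).re)] with s hs
    exact Complex.Gamma_eq_integral hs
  have h3 : HasDerivAt (fun x : ℝ ↦ Complex.Gamma x)
      ((∫ t in Set.Ioi (0:ℝ), Real.exp (-t) * Real.log t : ℝ) : ℂ) 1 := by
    have := h2.comp_ofReal (z := 1)
    simpa using this
  have h4 : HasDerivAt (fun x : ℝ ↦ ((Real.Gamma x : ℝ) : ℂ))
      ((-Real.eulerMascheroniConstant : ℝ) : ℂ) 1 := by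
    exact_mod_cast Real.hasDerivAt_Gamma_one.ofReal_comp
  have heq : (fun x : ℝ ↦ Complex.Gamma x) = (fun x : ℝ ↦ ((Real.Gamma x : ℝ) : ℂ)) := by
    funext x
    exact Complex.Gamma_ofReal x
  rw [heq] at h3
  exact_mod_cast h3.unique h4

open MeasureTheory Real Set Filter Topology

lemma my_bound_one_sub_exp {x : ℝ} (hx : 0 < x) : 0 ≤ 1 - Real.exp (-x) ∧ 1 - Real.exp (-x) ≤ x := by
  constructor
  · have : Real.exp (-x) ≤ 1 := Real.exp_le_one_iff.mpr (by linarith)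
    linarith
  · have := Real.add_one_le_exp (-x)
    nlinarith [Real.exp_pos (-x)]

lemma my_integrableOn_one_sub_exp_div :
    IntegrableOn (fun x : ℝ ↦ (1 - Real.exp (-x)) / x) (Set.Ioc (0:ℝ) 1) := by
  have hmeas : Measurable (fun x : ℝ ↦ (1 - Real.exp (-x)) / x) :=
    (measurable_const.sub (Real.measurable_exp.comp measurable_neg)).div measurable_id
  apply Measure.integrableOn_of_bounded (M := 1)
  · exact (measure_Ioc_lt_top).ne
  · exact hmeas.aestronglyMeasurable
  · filter_upwards [ae_restrict_mem measurableSet_Ioc] with x hx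
    obtain ⟨h0, h1⟩ := my_bound_one_sub_exp hx.1
    rw [Real.norm_eq_abs, abs_div, abs_of_nonneg h0, abs_of_pos hx.1, div_le_one hx.1]
    exact h1

lemma my_hasDerivAt_one_sub_exp (x : ℝ) :
    HasDerivAt (fun x : ℝ ↦ 1 - Real.exp (-x)) (Real.exp (-x)) x := by
  have h1 : HasDerivAt (fun x : ℝ ↦ -x) (-1) x := (hasDerivAt_id x).neg
  have h2 : HasDerivAt (fun x : ℝ ↦ Real.exp (-x)) (Real.exp (-x) * -1) x :=
    (Real.hasDerivAt_exp (-x)).comp x h1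
  exact ((hasDerivAt_const x (1:ℝ)).sub h2).congr_deriv (by ring)

lemma my_integral_Ioc_zero :
    ∫ x in (0:ℝ)..1, (Real.exp (-x) * Real.log x + (1 - Real.exp (-x)) / x) = 0 := by
  have h := intervalIntegral.integral_eq_sub_of_hasDerivAt_of_tendsto
    (f := fun x : ℝ ↦ (1 - Real.exp (-x)) * Real.log x)
    (f' := fun x : ℝ ↦ Real.exp (-x) * Real.log x + (1 - Real.exp (-x)) / x)
    (a := (0:ℝ)) (b := 1) one_pos
    (fa := 0) (fb := 0) ?_ ?_ ?_ ?_
  · simpa using h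
  · intro x hx
    have hx0 : x ≠ 0 := hx.1.ne'
    have := (my_hasDerivAt_one_sub_exp x).mul (Real.hasDerivAt_log hx0)
    exact this.congr_deriv (by ring)
  · rw [intervalIntegrable_iff_integrableOn_Ioc_of_le zero_le_one]
    exact my_integrableOn_exp_mul_log_Ioc.add my_integrableOn_one_sub_exp_div
  · -- tendsto at 0⁺
    have t1 : Tendsto (fun x : ℝ ↦ (1 - Real.exp (-x)) / x) (𝓝[>] 0) (𝓝 1) := by
      have h := (my_hasDerivAt_one_sub_exp 0)
      rw [hasDerivAt_iff_tendsto_slope] at h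
      simp only [Real.exp_zero, neg_zero] at h
      have h' := h.mono_left (nhdsWithin_mono _ (fun x hx ↦ ne_of_gt hx))
      refine h'.congr' ?_
      filter_upwards [self_mem_nhdsWithin] with x hx
      rw [slope_def_field]
      simp
    have t2 : Tendsto (fun x : ℝ ↦ Real.log x * x ^ (1:ℝ)) (𝓝[>] 0) (𝓝 0) :=
      tendsto_log_mul_rpow_nhdsGT_zero one_pos
    have := t1.mul t2
    rw [one_mul] at this
    refine this.congr' ?_
    filter_upwards [self_mem_nhdsWithin] with x (hx : 0 < x)
    rw [Real.rpow_one]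
    field_simp
  · -- tendsto at 1⁻
    have hc : ContinuousAt (fun x : ℝ ↦ (1 - Real.exp (-x)) * Real.log x) 1 := by
      apply ContinuousAt.mul
      · exact (continuous_const.sub (Real.continuous_exp.comp continuous_neg)).continuousAt
      · exact Real.continuousAt_log one_ne_zero
    have := hc.continuousWithinAt (s := Set.Iio 1)
    simpa [ContinuousWithinAt] using this

open MeasureTheory Real Set Filter Topology

lemma my_integrableOn_inv_one_add :
    IntegrableOn (fun x : ℝ ↦ 1 / (1 + x)) (Set.Ioc (0:ℝ) 1) := by
  rw [← integrableOn_Icc_iff_integrableOn_Ioc]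
  apply ContinuousOn.integrableOn_Icc
  apply ContinuousOn.div continuousOn_const (continuous_const.add continuous_id).continuousOn
  intro x hx
  simp only [Pi.add_apply, id_eq]
  nlinarith [hx.1]

lemma my_integral_inv_one_add : ∫ x in Set.Ioc (0:ℝ) 1, 1 / (1 + x) = Real.log 2 := by
  rw [← intervalIntegral.integral_of_le zero_le_one]
  have h := intervalIntegral.integral_comp_add_left (a := (0:ℝ)) (b := 1)
    (fun x : ℝ ↦ 1 / x) 1
  simp only [add_zero] at h
  rw [h, integral_one_div_of_pos one_pos (by norm_num : (0:ℝ) < 1 + 1)]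
  norm_num

lemma my_eqOn_Ioc : ∀ x ∈ Set.Ioc (0:ℝ) 1,
    (Real.exp (-x) - 1 / (1 + x)) / x
      = 1 / (1 + x) - (1 - Real.exp (-x)) / x := by
  intro x hx
  have hx0 : x ≠ 0 := hx.1.ne'
  have hx1 : (1:ℝ) + x ≠ 0 := by nlinarith [hx.1]
  field_simp
  ring

lemma my_integral_Ioc_f :
    ∫ x in Set.Ioc (0:ℝ) 1, (Real.exp (-x) - 1 / (1 + x)) / x
      = (∫ x in Set.Ioc (0:ℝ) 1, Real.exp (-x) * Real.log x) + Real.log 2 := by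
  rw [setIntegral_congr_fun measurableSet_Ioc my_eqOn_Ioc,
    integral_sub my_integrableOn_inv_one_add my_integrableOn_one_sub_exp_div,
    my_integral_inv_one_add]
  have hz : (∫ x in Set.Ioc (0:ℝ) 1,
      (Real.exp (-x) * Real.log x + (1 - Real.exp (-x)) / x)) = 0 := by
    rw [← intervalIntegral.integral_of_le zero_le_one]
    exact my_integral_Ioc_zero
  rw [integral_add my_integrableOn_exp_mul_log_Ioc my_integrableOn_one_sub_exp_div] at hz
  linarith

open MeasureTheory Real Set Filter Topology

lemma my_integrableOn_exp_div_Ioi1 :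
    IntegrableOn (fun x : ℝ ↦ Real.exp (-x) * x⁻¹) (Set.Ioi (1:ℝ)) := by
  have hbase : IntegrableOn (fun x : ℝ ↦ Real.exp (-(1:ℝ) * x)) (Set.Ioi (1:ℝ)) :=
    exp_neg_integrableOn_Ioi 1 one_pos
  apply Integrable.mono hbase
    ((Real.measurable_exp.comp measurable_neg).mul measurable_inv).aestronglyMeasurable.restrict
  filter_upwards [ae_restrict_mem measurableSet_Ioi] with x hx
  have hx1 : (1:ℝ) ≤ x := le_of_lt hx
  have hx0 : (0:ℝ) < x := lt_of_lt_of_le one_pos hx1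
  rw [Real.norm_eq_abs, Real.norm_eq_abs, neg_one_mul, abs_exp, Pi.mul_apply, abs_mul]
  rw [show |(rexp ∘ Neg.neg) x| = Real.exp (-x) by simp [abs_exp],
    abs_of_pos (inv_pos.mpr hx0)]
  nlinarith [Real.exp_pos (-x), inv_le_one_of_one_le₀ hx1, (inv_pos.mpr hx0)]

lemma my_hasDerivAt_log_sub {x : ℝ} (hx : 0 < x) :
    HasDerivAt (fun x : ℝ ↦ Real.log x - Real.log (1 + x)) (x⁻¹ - (1 + x)⁻¹) x := by
  have h1 : HasDerivAt (fun x : ℝ ↦ (1:ℝ) + x) 1 x := (hasDerivAt_id x).const_add 1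
  have h2 : HasDerivAt (fun x : ℝ ↦ Real.log (1 + x)) ((1 + x)⁻¹ * 1) x :=
    (Real.hasDerivAt_log (by positivity)).comp x h1
  exact ((Real.hasDerivAt_log hx.ne').sub h2).congr_deriv (by ring)

lemma my_tendsto_log_sub :
    Tendsto (fun x : ℝ ↦ Real.log x - Real.log (1 + x)) atTop (𝓝 0) := by
  have t1 : Tendsto (fun x : ℝ ↦ 1 + x⁻¹) atTop (𝓝 1) := by
    have := tendsto_const_nhds (x := (1:ℝ)) (f := atTop (α := ℝ)) |>.add tendsto_inv_atTop_zero
    simpa using this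
  have t2 : Tendsto (fun x : ℝ ↦ -Real.log (1 + x⁻¹)) atTop (𝓝 0) := by
    have := ((Real.continuousAt_log one_ne_zero).tendsto.comp t1).neg
    simpa using this
  refine t2.congr' ?_
  filter_upwards [eventually_gt_atTop (0:ℝ)] with x hx
  rw [show Real.log x - Real.log (1 + x) = -(Real.log (1 + x) - Real.log x) by ring,
    ← Real.log_div (by positivity) hx.ne',
    show (1 + x) / x = 1 + x⁻¹ by field_simp; ring]

lemma my_nonneg_inv_sub {x : ℝ} (hx : x ∈ Set.Ioi (1:ℝ)) : 0 ≤ x⁻¹ - (1 + x)⁻¹ := by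
  have hx0 : (0:ℝ) < x := lt_trans one_pos hx
  have h1 : (1 + x)⁻¹ ≤ x⁻¹ := by
    apply inv_anti₀ hx0
    linarith
  linarith

lemma my_contAt_log_sub : ContinuousWithinAt
    (fun x : ℝ ↦ Real.log x - Real.log (1 + x)) (Set.Ici (1:ℝ)) 1 := by
  apply ContinuousAt.continuousWithinAt
  apply ContinuousAt.sub
  · exact Real.continuousAt_log one_ne_zero
  · exact (Real.continuousAt_log (by norm_num)).comp
      (continuous_const.add continuous_id).continuousAt

lemma my_integrableOn_inv_sub_Ioi1 :
    IntegrableOn (fun x : ℝ ↦ x⁻¹ - (1 + x)⁻¹) (Set.Ioi (1:ℝ)) :=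
  integrableOn_Ioi_deriv_of_nonneg my_contAt_log_sub
    (fun x hx ↦ my_hasDerivAt_log_sub (lt_trans one_pos hx))
    (fun x hx ↦ my_nonneg_inv_sub hx) my_tendsto_log_sub

lemma my_integral_inv_sub_Ioi1 :
    ∫ x in Set.Ioi (1:ℝ), (x⁻¹ - (1 + x)⁻¹) = Real.log 2 := by
  have h := integral_Ioi_of_hasDerivAt_of_nonneg
    (g := fun x : ℝ ↦ Real.log x - Real.log (1 + x))
    (g' := fun x : ℝ ↦ x⁻¹ - (1 + x)⁻¹) (a := 1) (l := 0)
    my_contAt_log_sub (fun x hx ↦ my_hasDerivAt_log_sub (lt_trans one_pos hx))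
    (fun x hx ↦ my_nonneg_inv_sub hx) my_tendsto_log_sub
  rw [h]
  norm_num

open MeasureTheory Real Set Filter Topology

lemma my_hasDerivAt_neg_exp_mul_log {x : ℝ} (hx : 0 < x) :
    HasDerivAt (fun x : ℝ ↦ -(Real.exp (-x) * Real.log x))
      (Real.exp (-x) * Real.log x - Real.exp (-x) * x⁻¹) x := by
  have h1 : HasDerivAt (fun x : ℝ ↦ Real.exp (-x)) (Real.exp (-x) * -1) x :=
    (Real.hasDerivAt_exp (-x)).comp x (hasDerivAt_id x).neg
  have h2 := (h1.mul (Real.hasDerivAt_log hx.ne')).neg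
  exact h2.congr_deriv (by ring)

lemma my_tendsto_exp_mul_log : Tendsto (fun x : ℝ ↦ -(Real.exp (-x) * Real.log x)) atTop (𝓝 0) := by
  have hb : Tendsto (fun x : ℝ ↦ x ^ (1:ℝ) * Real.exp (-1 * x)) atTop (𝓝 0) :=
    tendsto_rpow_mul_exp_neg_mul_atTop_nhds_zero 1 1 one_pos
  have hsq : Tendsto (fun x : ℝ ↦ Real.exp (-x) * Real.log x) atTop (𝓝 0) := by
    refine squeeze_zero' ?_ ?_ hb
    · filter_upwards [eventually_ge_atTop (1:ℝ)] with x hx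
      exact mul_nonneg (Real.exp_pos _).le (Real.log_nonneg hx)
    · filter_upwards [eventually_ge_atTop (1:ℝ)] with x hx
      rw [Real.rpow_one, neg_one_mul, mul_comm x]
      apply mul_le_mul_of_nonneg_left _ (Real.exp_pos _).le
      calc Real.log x ≤ x - 1 := Real.log_le_sub_one_of_pos (by linarith)
        _ ≤ x := by linarith
  simpa using hsq.neg

lemma my_integral_exp_log_sub_Ioi1 :
    ∫ x in Set.Ioi (1:ℝ), (Real.exp (-x) * Real.log x - Real.exp (-x) * x⁻¹) = 0 := by
  have h := integral_Ioi_of_hasDerivAt_of_tendsto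
    (f := fun x : ℝ ↦ -(Real.exp (-x) * Real.log x))
    (f' := fun x : ℝ ↦ Real.exp (-x) * Real.log x - Real.exp (-x) * x⁻¹)
    (a := 1) (m := 0)
    (((Real.continuous_exp.comp continuous_neg).continuousAt.mul
      (Real.continuousAt_log one_ne_zero)).neg).continuousWithinAt
    (fun x hx ↦ my_hasDerivAt_neg_exp_mul_log (lt_trans one_pos hx))
    (my_integrableOn_exp_mul_log_Ioi1.sub my_integrableOn_exp_div_Ioi1)
    my_tendsto_exp_mul_log
  rw [h]
  simp

lemma my_eqOn_Ioi : ∀ x ∈ Set.Ioi (1:ℝ),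
    (Real.exp (-x) - 1 / (1 + x)) / x
      = Real.exp (-x) * x⁻¹ - (x⁻¹ - (1 + x)⁻¹) := by
  intro x hx
  have hx0 : x ≠ 0 := (lt_trans one_pos hx).ne'
  have hx1 : (1:ℝ) + x ≠ 0 := by
    have : (1:ℝ) < x := hx
    intro h; nlinarith
  field_simp
  ring

lemma my_integral_Ioi1_f :
    ∫ x in Set.Ioi (1:ℝ), (Real.exp (-x) - 1 / (1 + x)) / x
      = (∫ x in Set.Ioi (1:ℝ), Real.exp (-x) * Real.log x) - Real.log 2 := by
  rw [setIntegral_congr_fun measurableSet_Ioi my_eqOn_Ioi,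
    integral_sub my_integrableOn_exp_div_Ioi1 my_integrableOn_inv_sub_Ioi1,
    my_integral_inv_sub_Ioi1]
  congr 1
  have h := my_integral_exp_log_sub_Ioi1
  rw [integral_sub my_integrableOn_exp_mul_log_Ioi1 my_integrableOn_exp_div_Ioi1] at h
  linarith

theorem integral_exp_sub_inv_one_add_div_eq_neg_gamma :
    ∫ x in Set.Ioi (0 : ℝ), (Real.exp (-x) - 1 / (1 + x)) / x
      = -Real.eulerMascheroniConstant := by
  have h1 : IntegrableOn (fun x : ℝ ↦ 1 / (1 + x) - (1 - Real.exp (-x)) / x)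
      (Set.Ioc (0:ℝ) 1) := my_integrableOn_inv_one_add.sub my_integrableOn_one_sub_exp_div
  have h2 : IntegrableOn (fun x : ℝ ↦ Real.exp (-x) * x⁻¹ - (x⁻¹ - (1 + x)⁻¹))
      (Set.Ioi (1:ℝ)) := my_integrableOn_exp_div_Ioi1.sub my_integrableOn_inv_sub_Ioi1
  have hIoc : IntegrableOn (fun x : ℝ ↦ (Real.exp (-x) - 1 / (1 + x)) / x) (Set.Ioc (0:ℝ) 1) :=
    h1.congr_fun (fun x hx ↦ (my_eqOn_Ioc x hx).symm) measurableSet_Ioc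
  have hIoi : IntegrableOn (fun x : ℝ ↦ (Real.exp (-x) - 1 / (1 + x)) / x) (Set.Ioi (1:ℝ)) :=
    h2.congr_fun (fun x hx ↦ (my_eqOn_Ioi x hx).symm) measurableSet_Ioi
  rw [← Set.Ioc_union_Ioi_eq_Ioi (zero_le_one (α := ℝ)),
    setIntegral_union (Set.Ioc_disjoint_Ioi le_rfl) measurableSet_Ioi hIoc hIoi,
    my_integral_Ioc_f, my_integral_Ioi1_f]
  have hsplit : (∫ x in Set.Ioc (0:ℝ) 1, Real.exp (-x) * Real.log x)
      + (∫ x in Set.Ioi (1:ℝ), Real.exp (-x) * Real.log x)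
      = ∫ x in Set.Ioi (0:ℝ), Real.exp (-x) * Real.log x := by
    rw [← setIntegral_union (Set.Ioc_disjoint_Ioi le_rfl) measurableSet_Ioi
      my_integrableOn_exp_mul_log_Ioc my_integrableOn_exp_mul_log_Ioi1,
      Set.Ioc_union_Ioi_eq_Ioi (zero_le_one (α := ℝ))]
  have hval := my_integral_exp_mul_log
  linarith
end

section
/- For every real number a > 0, ∫_0^1 (e^{1 - 1/t} - t^a)/(t(1-t)) dt = ψ(a). -/
open MeasureTheory Real intervalIntegral

namespace DigammaProof

open Set Filter Topology Metric

local notation "γ" => Real.eulerMascheroniConstant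

/-- The integral under study, as a function of the exponent `a`. -/
noncomputable def F (a : ℝ) : ℝ :=
  ∫ t in (0:ℝ)..1, (Real.exp (1 - 1 / t) - t ^ a) / (t * (1 - t))

lemma exp_le_self' {t : ℝ} (ht : 0 < t) : Real.exp (1 - 1/t) ≤ t := by
  have h := Real.log_le_sub_one_of_pos (x := 1/t) (by positivity)
  rw [Real.log_div one_ne_zero ht.ne', Real.log_one] at h
  have h2 : 1 - 1/t ≤ Real.log t := by linarith
  calc Real.exp (1 - 1/t) ≤ Real.exp (Real.log t) := Real.exp_le_exp.2 h2
    _ = t := Real.exp_log ht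

lemma neg_log_le {t : ℝ} (ht : 0 < t) : -Real.log t ≤ (1-t)/t := by
  have h := Real.log_le_sub_one_of_pos (x := 1/t) (by positivity)
  rw [Real.log_div one_ne_zero ht.ne', Real.log_one] at h
  have h' : (1:ℝ)/t - 1 = (1-t)/t := by field_simp
  linarith [h' ▸ h]

lemma phi_bound (a : ℝ) (ha : 0 < a) :
    ∀ t ∈ Ioc (0:ℝ) 1, |(Real.exp (1 - 1/t) - t ^ a) / (t * (1 - t))|
      ≤ (4+4*a) + (4+4*a) * t ^ (a-1) := by
  rintro t ⟨ht0, ht1⟩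
  have hrp : (0:ℝ) ≤ t ^ (a-1) := Real.rpow_nonneg ht0.le _
  have hca : (0:ℝ) < 4 + 4*a := by linarith
  rcases eq_or_lt_of_le ht1 with rfl | ht1'
  · rw [show (1:ℝ) - 1 = 0 by norm_num, mul_zero, div_zero, abs_zero]
    positivity
  have h1t : (0:ℝ) < 1 - t := by linarith
  have hdpos : (0:ℝ) < t * (1-t) := by positivity
  have hpa : t ^ a = t ^ (a-1) * t := by
    rw [← Real.rpow_add_one ht0.ne' (a-1)]; ring_nf
  have hpa0 : (0:ℝ) < t ^ a := Real.rpow_pos_of_pos ht0 _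
  rw [abs_div, abs_of_pos hdpos, div_le_iff₀ hdpos]
  rcases le_or_gt t (1/2) with hle | hgt
  · -- small t
    have hnum : |Real.exp (1 - 1/t) - t ^ a| ≤ t + t ^ (a-1) * t := by
      refine (abs_sub _ _).trans ?_
      rw [abs_of_pos (Real.exp_pos _), abs_of_pos hpa0, ← hpa]
      have := exp_le_self' ht0
      linarith
    refine hnum.trans ?_
    nlinarith [mul_nonneg (mul_nonneg hrp ht0.le) (show (0:ℝ) ≤ 1 - 2*t by linarith),
      mul_nonneg ht0.le (show (0:ℝ) ≤ 1 - 2*t by linarith), mul_pos ht0 h1t,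
      mul_nonneg (mul_nonneg hrp ht0.le) h1t.le]
  · -- t near 1
    have h1 : Real.exp (1 - 1/t) ≤ 1 := by
      rw [Real.exp_le_one_iff]
      have : 1 ≤ 1/t := by rw [le_div_iff₀ ht0]; linarith
      linarith
    have h2 : 2 - 1/t ≤ Real.exp (1 - 1/t) := by
      have := Real.add_one_le_exp (1 - 1/t); linarith
    have h3 : t ^ a ≤ 1 := Real.rpow_le_one ht0.le ht1 ha.le
    have h4 : 1 + a * Real.log t ≤ t ^ a := by
      rw [Real.rpow_def_of_pos ht0]
      have := Real.add_one_le_exp (Real.log t * a)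
      nlinarith
    have hid : (1-t)/t = 1/t - 1 := by field_simp
    have hti : (1:ℝ)/t ≤ 2 := by rw [div_le_iff₀ ht0]; linarith
    have h5' : -Real.log t ≤ 2*(1-t) := by
      have := neg_log_le ht0
      nlinarith [mul_nonneg (show (0:ℝ) ≤ 2*t - 1 by linarith) h1t.le,
        mul_one_div_cancel ht0.ne']
    have hnum : |Real.exp (1 - 1/t) - t ^ a| ≤ (2+2*a) * (1-t) := by
      rw [abs_le]
      constructor
      · have hlow : -(2*(1-t)) ≤ 1 - 1/t := by
          nlinarith [mul_nonneg (show (0:ℝ) ≤ 2*t - 1 by linarith) h1t.le,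
            mul_one_div_cancel ht0.ne']
        nlinarith [mul_pos ha (mul_pos ht0 h1t)]
      · nlinarith [mul_le_mul_of_nonneg_left h5' ha.le]
    refine hnum.trans ?_
    nlinarith [mul_nonneg (mul_nonneg hca.le hrp) hdpos.le,
      mul_nonneg (mul_nonneg hca.le (show (0:ℝ) ≤ t - 1/2 by linarith)) h1t.le]

/-- Master integrability lemma on `(0,1]`. -/
lemma II (f : ℝ → ℝ) (c r : ℝ) (hr : -1 < r)
    (hm : AEStronglyMeasurable f (volume.restrict (Ioc (0:ℝ) 1)))
    (hb : ∀ t ∈ Ioc (0:ℝ) 1, |f t| ≤ c + c * t ^ r) :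
    IntervalIntegrable f volume 0 1 := by
  rw [intervalIntegrable_iff_integrableOn_Ioc_of_le zero_le_one]
  have hg : IntegrableOn (fun t : ℝ => c + c * t ^ r) (Ioc (0:ℝ) 1) := by
    have h1 : IntervalIntegrable (fun t : ℝ => c + c * t ^ r) volume 0 1 := by
      exact intervalIntegrable_const.add ((intervalIntegrable_rpow' hr).const_mul c)
    rwa [intervalIntegrable_iff_integrableOn_Ioc_of_le zero_le_one] at h1
  refine hg.mono' hm ?_
  rw [ae_restrict_iff' measurableSet_Ioc]
  filter_upwards with t ht
  simpa [Real.norm_eq_abs] using hb t ht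

lemma phi_meas (a : ℝ) :
    AEStronglyMeasurable (fun t : ℝ => (Real.exp (1 - 1/t) - t ^ a) / (t * (1 - t)))
      (volume.restrict (Ioc (0:ℝ) 1)) := by
  apply Measurable.aestronglyMeasurable
  fun_prop

lemma phi_integrable (a : ℝ) (ha : 0 < a) :
    IntervalIntegrable (fun t : ℝ => (Real.exp (1 - 1/t) - t ^ a) / (t * (1 - t)))
      volume 0 1 :=
  II _ (4+4*a) (a-1) (by linarith) (phi_meas a) (phi_bound a ha)

lemma ae_ne_one : ∀ᵐ t : ℝ, t ≠ 1 := by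
  rw [ae_iff]
  simp only [ne_eq, not_not, setOf_eq_eq_singleton, Real.volume_singleton]

lemma F_mono : ∀ x y : ℝ, 0 < x → x ≤ y → F x ≤ F y := by
  intro x y hx hxy
  have hy : 0 < y := lt_of_lt_of_le hx hxy
  refine intervalIntegral.integral_mono_on zero_le_one (phi_integrable x hx)
    (phi_integrable y hy) ?_
  rintro t ⟨ht0, ht1⟩
  rcases eq_or_lt_of_le ht0 with rfl | ht0'
  · simp [Real.zero_rpow hx.ne', Real.zero_rpow hy.ne']
  rcases eq_or_lt_of_le ht1 with rfl | ht1'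
  · simp
  have hnum : t ^ y ≤ t ^ x := Real.rpow_le_rpow_of_exponent_ge ht0' ht1 hxy
  have hd : (0:ℝ) < t * (1-t) := by nlinarith
  gcongr

lemma F_rec : ∀ x : ℝ, 0 < x → F (x+1) = F x + 1/x := by
  intro x hx
  have hint1 := phi_integrable x hx
  have hint2 : IntervalIntegrable (fun t : ℝ => t ^ (x-1)) volume 0 1 :=
    intervalIntegrable_rpow' (by linarith)
  have key : F (x+1) = ∫ t in (0:ℝ)..1,
      ((Real.exp (1-1/t) - t ^ x)/(t*(1-t)) + t ^ (x-1)) := by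
    unfold F
    apply intervalIntegral.integral_congr_ae
    filter_upwards [ae_ne_one] with t ht hmem
    rw [Set.uIoc_of_le zero_le_one] at hmem
    obtain ⟨ht0, ht1⟩ := hmem
    have ht1' : t < 1 := lt_of_le_of_ne ht1 ht
    have hd : t * (1-t) ≠ 0 := by nlinarith
    have a1 : t ^ (x-1) * t = t ^ x := by
      rw [← Real.rpow_add_one ht0.ne']; ring_nf
    have a2 : t ^ x * t = t ^ (x+1) := by
      rw [← Real.rpow_add_one ht0.ne']
    have e1 : t ^ (x-1) * (t * (1-t)) = t ^ x - t ^ (x+1) := by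
      calc t ^ (x-1)*(t*(1-t)) = t ^ (x-1)*t - (t ^ (x-1)*t)*t := by ring
        _ = t ^ x - t ^ (x+1) := by rw [a1, a2]
    rw [div_add' _ _ _ hd]
    congr 1
    linarith
  rw [key, intervalIntegral.integral_add hint1 hint2, integral_rpow (Or.inl (by linarith))]
  have : x - 1 + 1 = x := by ring
  rw [this, Real.one_rpow, Real.zero_rpow hx.ne']
  show F x + (1 - 0)/x = F x + 1/x
  norm_num

/-- `exp x ≥ x^2/4` for `x ≥ 0`. -/
lemma sq_div_four_le_exp {x : ℝ} (hx : 0 ≤ x) : x^2/4 ≤ Real.exp x := by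
  have h1 : Real.exp (x/2) * Real.exp (x/2) = Real.exp x := by
    rw [← Real.exp_add]; ring_nf
  have h2 : x/2 ≤ Real.exp (x/2) := by
    have := Real.add_one_le_exp (x/2); linarith
  nlinarith [Real.exp_pos (x/2)]

/-- key bound for the inner integrand -/
lemma inner_bound {b t : ℝ} (hb : 0 < b) (ht : 0 < t) (ht1 : t ≤ 1) :
    Real.exp (b*(1-1/t))/t^2 ≤ 4*Real.exp b/b^2 := by
  have h0 : Real.exp (b*(1-1/t)) = Real.exp b * Real.exp (-(b/t)) := by
    rw [← Real.exp_add]; congr 1; field_simp; ring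
  have h1 : (b/t)^2/4 ≤ Real.exp (b/t) := sq_div_four_le_exp (by positivity)
  have h2 : Real.exp (-(b/t)) ≤ 4*t^2/b^2 := by
    rw [Real.exp_neg, inv_le_iff_one_le_mul₀ (Real.exp_pos _), div_mul_eq_mul_div,
      le_div_iff₀ (by positivity)]
    rw [div_pow, div_div, div_le_iff₀ (by positivity)] at h1
    nlinarith
  rw [div_le_div_iff₀ (by positivity) (by positivity)]
  calc Real.exp (b*(1-1/t)) * b^2 = Real.exp b * Real.exp (-(b/t)) * b^2 := by rw [h0]
    _ ≤ Real.exp b * (4*t^2/b^2) * b^2 :=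
        mul_le_mul_of_nonneg_right (mul_le_mul_of_nonneg_left h2 (Real.exp_pos b).le)
          (by positivity)
    _ = 4*Real.exp b*t^2 := by field_simp

noncomputable def G (b : ℝ) (t : ℝ) : ℝ :=
  (Real.exp (1-1/t) - Real.exp (b*(1-1/t)))/(t*(1-t))

/-- constant pointwise bound for the Frullani integrand -/
lemma G_bound {b : ℝ} (hb : 1 ≤ b) : ∀ t ∈ Ioc (0:ℝ) 1, |G b t| ≤ 4*b := by
  rintro t ⟨ht0, ht1⟩
  rcases eq_or_lt_of_le ht1 with rfl | ht1'
  · rw [G, show (1:ℝ) - 1 = 0 by norm_num, mul_zero, div_zero, abs_zero]; linarith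
  have h1t : (0:ℝ) < 1 - t := by linarith
  have hu : 1 - 1/t ≤ 0 := by
    have : 1 ≤ 1/t := by rw [le_div_iff₀ ht0]; linarith
    linarith
  have hbu : b*(1-1/t) ≤ 1*(1-1/t) := by nlinarith
  have hnum0 : 0 ≤ Real.exp (1-1/t) - Real.exp (b*(1-1/t)) := by
    have := Real.exp_le_exp.2 hbu; rw [one_mul] at this; linarith
  rw [G, abs_div, abs_of_pos (by nlinarith : (0:ℝ) < t*(1-t)), abs_of_nonneg hnum0,
    div_le_iff₀ (by nlinarith)]
  rcases le_or_gt t (1/2) with hle | hgt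
  · have h2 : Real.exp (1-1/t) ≤ t := exp_le_self' ht0
    have h3 : 0 < Real.exp (b*(1-1/t)) := Real.exp_pos _
    nlinarith [mul_pos ht0 h1t]
  · -- numerator ≤ (b-1)(1-t)/t
    have hsplit : Real.exp (b*(1-1/t)) = Real.exp (1-1/t) * Real.exp ((b-1)*(1-1/t)) := by
      rw [← Real.exp_add]; congr 1; ring
    have h4 : 1 + (b-1)*(1-1/t) ≤ Real.exp ((b-1)*(1-1/t)) := by
      have := Real.add_one_le_exp ((b-1)*(1-1/t)); linarith
    have h5 : Real.exp (1-1/t) ≤ 1 := by rw [Real.exp_le_one_iff]; exact hu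
    have h6 : Real.exp (1-1/t) - Real.exp (b*(1-1/t))
        ≤ -((b-1)*(1-1/t)) := by
      rw [hsplit]
      have he0 : 0 < Real.exp (1-1/t) := Real.exp_pos _
      nlinarith
    have hid : -((b-1)*(1-1/t)) = (b-1)*((1-t)/t) := by field_simp; ring
    rw [hid] at h6
    refine h6.trans ?_
    have hq : (1-t)/t ≤ 2*(1-t) := by
      rw [div_le_iff₀ ht0]; nlinarith
    have hb1 : (0:ℝ) ≤ b - 1 := by linarith
    calc (b-1)*((1-t)/t) ≤ (b-1)*(2*(1-t)) := mul_le_mul_of_nonneg_left hq hb1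
      _ ≤ 4*b*(t*(1-t)) := by
          nlinarith [mul_nonneg h1t.le (show (0:ℝ) ≤ 4*b*t - 2*b + 2 by nlinarith)]

lemma II_const (f : ℝ → ℝ) (c : ℝ)
    (hm : AEStronglyMeasurable f (volume.restrict (Ioc (0:ℝ) 1)))
    (hb : ∀ t ∈ Ioc (0:ℝ) 1, |f t| ≤ c) :
    IntervalIntegrable f volume 0 1 := by
  rw [intervalIntegrable_iff_integrableOn_Ioc_of_le zero_le_one]
  refine Integrable.mono' (g := fun _ => c)
    (integrableOn_const measure_Ioc_lt_top.ne) hm ?_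
  rw [ae_restrict_iff' measurableSet_Ioc]
  filter_upwards with t ht
  simpa [Real.norm_eq_abs] using hb t ht

lemma G_meas (b : ℝ) :
    AEStronglyMeasurable (G b) (volume.restrict (Ioc (0:ℝ) 1)) := by
  apply Measurable.aestronglyMeasurable
  unfold G; fun_prop

lemma G_integrable {b : ℝ} (hb : 1 ≤ b) : IntervalIntegrable (G b) volume 0 1 :=
  II_const _ (4*b) (G_meas b) (G_bound hb)

lemma inner_meas (b : ℝ) :
    AEStronglyMeasurable (fun t : ℝ => Real.exp (b*(1-1/t))/t^2)
      (volume.restrict (Ioc (0:ℝ) 1)) := by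
  apply Measurable.aestronglyMeasurable; fun_prop

lemma inner_integrable {b : ℝ} (hb : 0 < b) :
    IntervalIntegrable (fun t : ℝ => Real.exp (b*(1-1/t))/t^2) volume 0 1 := by
  refine II_const _ (4*Real.exp b/b^2) (inner_meas b) ?_
  rintro t ⟨ht0, ht1⟩
  rw [abs_of_pos (by positivity)]
  exact inner_bound hb ht0 ht1

lemma inner_integral {b : ℝ} (hb : 0 < b) :
    ∫ t in (0:ℝ)..1, Real.exp (b*(1-1/t))/t^2 = 1/b := by
  set H : ℝ → ℝ := fun t => if t ≤ 0 then 0 else Real.exp (b*(1-1/t))/b with hH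
  have hH0 : H 0 = 0 := if_pos le_rfl
  have hHpos : ∀ t : ℝ, 0 < t → H t = Real.exp (b*(1-1/t))/b := fun t ht =>
    if_neg (not_le.2 ht)
  have hcont : ContinuousOn H (Icc 0 1) := by
    intro x hx
    rcases eq_or_lt_of_le hx.1 with rfl | hx0
    · rw [ContinuousWithinAt, hH0]
      have hub : ∀ t ∈ Icc (0:ℝ) 1, H t ≤ (4*Real.exp b/(b^2*b))*t^2 := by
        rintro t ⟨ht0, ht1⟩
        rcases eq_or_lt_of_le ht0 with rfl | ht0'
        · rw [hH0]; norm_num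
        rw [hHpos t ht0', div_le_iff₀ hb]
        have h1 := inner_bound hb ht0' ht1
        rw [div_le_iff₀ (by positivity : (0:ℝ) < t^2)] at h1
        refine h1.trans (le_of_eq ?_)
        field_simp
      have hlb : ∀ t ∈ Icc (0:ℝ) 1, 0 ≤ H t := by
        intro t _
        rw [hH]
        dsimp only
        split
        · exact le_refl 0
        · positivity
      refine squeeze_zero' (Filter.eventually_of_mem self_mem_nhdsWithin hlb)
        (Filter.eventually_of_mem self_mem_nhdsWithin hub) ?_
      have hc : Continuous (fun t : ℝ => (4*Real.exp b/(b^2*b))*t^2) := by continuity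
      have := (hc.tendsto 0).mono_left (nhdsWithin_le_nhds (s := Icc (0:ℝ) 1))
      simpa using this
    · apply ContinuousAt.continuousWithinAt
      have heq : (fun u : ℝ => Real.exp (b*(1-1/u))/b) =ᶠ[𝓝 x] H := by
        filter_upwards [eventually_gt_nhds hx0] with u hu
        exact (hHpos u hu).symm
      refine ContinuousAt.congr ?_ heq
      apply ContinuousAt.div_const
      apply Real.continuous_exp.continuousAt.comp
      exact ((continuousAt_const.div continuousAt_id hx0.ne').const_sub 1).const_mul b
  have hderiv : ∀ t ∈ Ioo (0:ℝ) 1, HasDerivWithinAt H (Real.exp (b*(1-1/t))/t^2) (Ioi t) t := by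
    rintro t ⟨ht0, _⟩
    have h1 : HasDerivAt (fun u : ℝ => 1 - 1/u) ((t^2)⁻¹) t := by
      simpa [one_div] using ((hasDerivAt_inv ht0.ne').const_sub 1)
    have h2 := ((h1.const_mul b).exp).div_const b
    have hval : Real.exp (b*(1-1/t)) * (b * (t^2)⁻¹) / b = Real.exp (b*(1-1/t))/t^2 := by
      field_simp
    rw [hval] at h2
    have heq : H =ᶠ[𝓝 t] (fun u : ℝ => Real.exp (b*(1-1/u))/b) := by
      filter_upwards [eventually_gt_nhds ht0] with u hu
      exact hHpos u hu
    exact (h2.congr_of_eventuallyEq heq).hasDerivWithinAt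
  have hftc := intervalIntegral.integral_eq_sub_of_hasDeriv_right_of_le zero_le_one hcont
    hderiv (inner_integrable hb)
  rw [hftc, hH0, hHpos 1 one_pos]
  norm_num

noncomputable def K (b : ℝ) : ℝ := ∫ t in Ioc (0:ℝ) 1, G b t

lemma K_eq (b : ℝ) : K b = ∫ t in (0:ℝ)..1, G b t :=
  (intervalIntegral.integral_of_le zero_le_one).symm

set_option maxHeartbeats 1000000 in
lemma hasDerivAt_K {b : ℝ} (hb : 1 ≤ b) : HasDerivAt K (1/b) b := by
  have hmeas : ∀ᶠ x in 𝓝 b, AEStronglyMeasurable (G x) (volume.restrict (Ioc (0:ℝ) 1)) :=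
    Filter.Eventually.of_forall (fun x => G_meas x)
  have hint : Integrable (G b) (volume.restrict (Ioc (0:ℝ) 1)) :=
    (intervalIntegrable_iff_integrableOn_Ioc_of_le zero_le_one).1 (G_integrable hb)
  have hbound : ∀ᵐ t ∂(volume.restrict (Ioc (0:ℝ) 1)), ∀ x ∈ Metric.ball b (1/4),
      ‖Real.exp (x*(1-1/t))/t^2‖ ≤ (64:ℝ) := by
    rw [ae_restrict_iff' measurableSet_Ioc]
    filter_upwards with t ht
    rintro x hx
    obtain ⟨ht0, ht1⟩ := ht
    rw [Metric.mem_ball, Real.dist_eq, abs_lt] at hx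
    have hx34 : (3/4 : ℝ) ≤ x := by linarith
    have hu : 1 - 1/t ≤ 0 := by
      have : 1 ≤ 1/t := by rw [le_div_iff₀ ht0]; linarith
      linarith
    have h1 : Real.exp (x*(1-1/t)) ≤ Real.exp ((3/4)*(1-1/t)) := by
      apply Real.exp_le_exp.2
      nlinarith
    have h2 := inner_bound (b := 3/4) (by norm_num) ht0 ht1
    have h3 : Real.exp (3/4 : ℝ) ≤ 3 := by
      have h := Real.exp_one_lt_d9
      have h4 : Real.exp (3/4 : ℝ) ≤ Real.exp 1 := Real.exp_le_exp.2 (by norm_num)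
      linarith
    rw [Real.norm_eq_abs, abs_of_pos (by positivity)]
    have h5 : Real.exp (x*(1-1/t))/t^2 ≤ Real.exp ((3/4)*(1-1/t))/t^2 := by gcongr
    have h6 : 4*Real.exp (3/4:ℝ)/(3/4:ℝ)^2 ≤ 64 := by
      rw [div_le_iff₀ (by norm_num)]
      nlinarith
    linarith
  have hbint : Integrable (fun _ : ℝ => (64:ℝ)) (volume.restrict (Ioc (0:ℝ) 1)) :=
    integrableOn_const measure_Ioc_lt_top.ne
  have hdiff : ∀ᵐ t ∂(volume.restrict (Ioc (0:ℝ) 1)), ∀ x ∈ Metric.ball b (1/4),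
      HasDerivAt (fun y => G y t) (Real.exp (x*(1-1/t))/t^2) x := by
    rw [ae_restrict_iff' measurableSet_Ioc]
    filter_upwards [ae_ne_one] with t htne ht
    obtain ⟨ht0, ht1⟩ := ht
    have ht1' : t < 1 := lt_of_le_of_ne ht1 htne
    rintro x -
    have h1 : HasDerivAt (fun y : ℝ => y*(1-1/t)) (1-1/t) x := hasDerivAt_mul_const _
    have h4 := (h1.exp.const_sub (Real.exp (1-1/t))).div_const (t*(1-t))
    have hval : -(Real.exp (x*(1-1/t)) * (1-1/t))/(t*(1-t)) = Real.exp (x*(1-1/t))/t^2 := by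
      rw [div_eq_div_iff (by nlinarith) (by positivity)]
      have : 1 - 1/t = -((1-t)/t) := by field_simp; ring
      rw [this]
      field_simp
    rw [hval] at h4
    exact h4
  have hmain := _root_.hasDerivAt_integral_of_dominated_loc_of_deriv_le
    (μ := volume.restrict (Ioc (0:ℝ) 1)) (F := G)
    (F' := fun (x : ℝ) (t : ℝ) => Real.exp (x*(1-1/t))/t^2)
    (bound := fun _ => (64:ℝ)) (x₀ := b) (s := Metric.ball b (1/4))
    (Metric.ball_mem_nhds b (by norm_num : (0:ℝ) < 1/4)) hmeas hint (inner_meas b) hbound hbint hdiff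
  have hval2 : (∫ t, Real.exp (b*(1-1/t))/t^2 ∂(volume.restrict (Ioc (0:ℝ) 1))) = 1/b := by
    rw [← intervalIntegral.integral_of_le zero_le_one]
    exact inner_integral (by linarith)
  have hres := hmain.2
  rw [hval2] at hres
  exact hres

lemma K_one : K 1 = 0 := by
  have : ∀ t : ℝ, G 1 t = 0 := by
    intro t; rw [G, one_mul, sub_self, zero_div]
  simp [K, this]

lemma K_log {b : ℝ} (hb : 1 ≤ b) : K b = Real.log b := by
  have h1 : ∀ y ∈ Set.uIcc (1:ℝ) b, HasDerivAt K (1/y) y := by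
    intro y hy
    rw [Set.uIcc_of_le hb] at hy
    exact hasDerivAt_K hy.1
  have h2 : IntervalIntegrable (fun y : ℝ => 1/y) volume 1 b := by
    apply ContinuousOn.intervalIntegrable
    apply ContinuousOn.div continuousOn_const continuousOn_id
    intro y hy
    rw [Set.uIcc_of_le hb] at hy
    exact (by linarith [hy.1] : (0:ℝ) < y).ne'
  have h3 := intervalIntegral.integral_eq_sub_of_hasDerivAt h1 h2
  rw [integral_one_div (by
    rw [Set.uIcc_of_le hb]
    rintro ⟨h0, -⟩
    linarith), K_one, div_one] at h3
  linarith

/-- The error integrand. -/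
noncomputable def P (m : ℕ) (t : ℝ) : ℝ :=
  (t^m - Real.exp ((m:ℝ)*(1-1/t)))/(t*(1-t))

lemma P_eq (m : ℕ) : P m = fun t : ℝ =>
    G (m:ℝ) t - (Real.exp (1 - 1/t) - t ^ (m:ℝ)) / (t * (1 - t)) := by
  funext t
  rw [P, G, div_sub_div_same, Real.rpow_natCast]
  congr 1
  ring

lemma P_integrable {m : ℕ} (hm : 1 ≤ m) : IntervalIntegrable (P m) volume 0 1 := by
  rw [P_eq]
  exact (G_integrable (by exact_mod_cast hm)).sub (phi_integrable m (Nat.cast_pos.mpr hm))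

lemma F_sub_log {m : ℕ} (hm : 1 ≤ m) :
    Real.log m - F m = ∫ t in (0:ℝ)..1, P m t := by
  have h1 : (1:ℝ) ≤ (m:ℝ) := by exact_mod_cast hm
  have h0 : (0:ℝ) < m := by linarith
  rw [← K_log h1, K_eq, P_eq]
  rw [intervalIntegral.integral_sub (G_integrable h1) (phi_integrable m h0)]
  rfl

lemma P_nonneg (m : ℕ) : ∀ t ∈ Icc (0:ℝ) 1, 0 ≤ P m t := by
  rintro t ⟨ht0, ht1⟩
  rcases eq_or_lt_of_le ht0 with rfl | ht0'
  · rw [P]; norm_num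
  rcases eq_or_lt_of_le ht1 with rfl | ht1'
  · rw [P]; norm_num
  have hs : Real.exp (1-1/t) ≤ t := exp_le_self' ht0'
  have hsm : Real.exp ((m:ℝ)*(1-1/t)) = Real.exp (1-1/t) ^ m := by
    rw [← Real.exp_nat_mul]
  have : Real.exp (1-1/t) ^ m ≤ t ^ m := pow_le_pow_left₀ (Real.exp_pos _).le hs m
  apply div_nonneg _ (by nlinarith)
  rw [hsm]; linarith

lemma P_le_small {m : ℕ} (hm : 1 ≤ m) : ∀ t ∈ Icc (0:ℝ) (1/2),
    P m t ≤ 2 * (1/2:ℝ)^(m-1) := by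
  rintro t ⟨ht0, ht1⟩
  rcases eq_or_lt_of_le ht0 with rfl | ht0'
  · rw [P]; norm_num
  have h1t : (0:ℝ) < 1 - t := by linarith
  have hd : (0:ℝ) < t * (1-t) := by positivity
  have hnum : t^m - Real.exp ((m:ℝ)*(1-1/t)) ≤ t^m := by
    have := Real.exp_pos ((m:ℝ)*(1-1/t)); linarith
  have hpow : t^m = t^(m-1) * t := by
    conv_lhs => rw [← Nat.sub_add_cancel hm]
    rw [pow_succ]
  have hple : t^(m-1) ≤ (1/2:ℝ)^(m-1) := pow_le_pow_left₀ ht0'.le ht1 _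
  rw [P, div_le_iff₀ hd]
  calc t^m - Real.exp ((m:ℝ)*(1-1/t)) ≤ t^(m-1) * t := by rw [← hpow]; exact hnum
    _ ≤ 2 * (1/2:ℝ)^(m-1) * (t * (1-t)) := by
        nlinarith [pow_nonneg ht0'.le (m-1), pow_nonneg (show (0:ℝ) ≤ 1/2 by norm_num) (m-1),
          mul_nonneg (pow_nonneg ht0'.le (m-1)) ht0'.le]

lemma P_le_big {m : ℕ} (hm : 1 ≤ m) : ∀ t ∈ Icc (1/2:ℝ) 1,
    P m t ≤ 4*m*(t^(m-1) - t^m) := by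
  rintro t ⟨ht0, ht1⟩
  have ht0' : (0:ℝ) < t := by linarith
  rcases eq_or_lt_of_le ht1 with rfl | ht1'
  · rw [P]; norm_num
  have h1t : (0:ℝ) < 1 - t := by linarith
  have hd : (0:ℝ) < t * (1-t) := by positivity
  set s : ℝ := Real.exp (1-1/t) with hsdef
  have hs0 : 0 < s := Real.exp_pos _
  have hst : s ≤ t := exp_le_self' ht0'
  have hsm : Real.exp ((m:ℝ)*(1-1/t)) = s ^ m := by rw [hsdef, ← Real.exp_nat_mul]
  have hts : t - s ≤ (1-t)^2/t := by
    have h2 : 2 - 1/t ≤ s := by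
      have := Real.add_one_le_exp (1 - 1/t); rw [hsdef]; linarith
    have hid : t - 2 + 1/t = (1-t)^2/t := by field_simp; ring
    linarith [hid ▸ (by linarith : t - s ≤ t - 2 + 1/t)]
  have hgeom : t^m - s^m = (∑ i ∈ Finset.range m, t^i * s^(m-1-i)) * (t - s) :=
    (geom_sum₂_mul t s m).symm
  have hsum : (∑ i ∈ Finset.range m, t^i * s^(m-1-i)) ≤ (m:ℝ) * t^(m-1) := by
    have h := Finset.sum_le_card_nsmul (Finset.range m)
      (fun i => t^i * s^(m-1-i)) (t^(m-1)) ?_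
    · simpa [Finset.card_range, nsmul_eq_mul] using h
    · intro i hi
      rw [Finset.mem_range] at hi
      calc t^i * s^(m-1-i) ≤ t^i * t^(m-1-i) := by
            have := pow_le_pow_left₀ hs0.le hst (m-1-i)
            nlinarith [pow_nonneg ht0'.le i, pow_nonneg hs0.le (m-1-i)]
        _ = t^(m-1) := by
            rw [← pow_add]
            congr 1
            omega
  have hsumpos : (0:ℝ) ≤ ∑ i ∈ Finset.range m, t^i * s^(m-1-i) :=
    Finset.sum_nonneg fun i _ => mul_nonneg (pow_nonneg ht0'.le _) (pow_nonneg hs0.le _)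
  have hts0 : 0 ≤ t - s := by linarith
  have hnum : t^m - s^m ≤ (m:ℝ) * t^(m-1) * ((1-t)^2/t) := by
    rw [hgeom]
    apply mul_le_mul hsum hts hts0
    positivity
  have hpow : t^(m-1) * t = t^m := by
    conv_rhs => rw [← Nat.sub_add_cancel hm]
    rw [pow_succ]
  rw [P, hsm, div_le_iff₀ hd]
  have hrhs : 4*(m:ℝ)*(t^(m-1) - t^m) * (t*(1-t)) = 4*(m:ℝ)*t^(m-1)*(1-t)^2*t := by
    rw [← hpow]; ring
  rw [hrhs]
  refine hnum.trans ?_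
  have h4 : (1:ℝ)/t ≤ 4*t := by
    rw [div_le_iff₀ ht0']; nlinarith
  have hmt : (0:ℝ) ≤ (m:ℝ)*t^(m-1)*(1-t)^2 := by positivity
  calc (m:ℝ) * t^(m-1) * ((1-t)^2/t) = ((m:ℝ)*t^(m-1)*(1-t)^2) * (1/t) := by ring
    _ ≤ ((m:ℝ)*t^(m-1)*(1-t)^2) * (4*t) := mul_le_mul_of_nonneg_left h4 hmt
    _ = 4*(m:ℝ)*t^(m-1)*(1-t)^2*t := by ring

lemma P_int_bound {m : ℕ} (hm : 1 ≤ m) :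
    (∫ t in (0:ℝ)..1, P m t) ≤ (1/2:ℝ)^(m-1) + 4/((m:ℝ)+1) := by
  have hmpos : (0:ℝ) < (m:ℝ) := by exact_mod_cast hm
  have hP := P_integrable hm
  have hsub1 : Set.uIcc (0:ℝ) (1/2) ⊆ Set.uIcc (0:ℝ) 1 := by
    rw [Set.uIcc_of_le (by norm_num : (0:ℝ) ≤ 1/2), Set.uIcc_of_le zero_le_one]
    exact Set.Icc_subset_Icc_right (by norm_num)
  have hsub2 : Set.uIcc (1/2:ℝ) 1 ⊆ Set.uIcc (0:ℝ) 1 := by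
    rw [Set.uIcc_of_le (by norm_num : (1/2:ℝ) ≤ 1), Set.uIcc_of_le zero_le_one]
    exact Set.Icc_subset_Icc_left (by norm_num)
  have hP1 : IntervalIntegrable (P m) volume 0 (1/2) := hP.mono_set hsub1
  have hP2 : IntervalIntegrable (P m) volume (1/2) 1 := hP.mono_set hsub2
  rw [← integral_add_adjacent_intervals hP1 hP2]
  have hb1 : (∫ t in (0:ℝ)..(1/2), P m t) ≤ (1/2:ℝ)^(m-1) := by
    have h := intervalIntegral.integral_mono_on (by norm_num : (0:ℝ) ≤ 1/2) hP1
      intervalIntegrable_const (P_le_small hm)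
    rw [intervalIntegral.integral_const] at h
    refine h.trans (le_of_eq ?_)
    rw [smul_eq_mul]
    ring
  have hb2 : (∫ t in (1/2:ℝ)..1, P m t) ≤ 4/((m:ℝ)+1) := by
    set g : ℝ → ℝ := fun t => 4*(m:ℝ)*(t^(m-1) - t^m) with hg
    have hgc : Continuous g := by continuity
    have h := intervalIntegral.integral_mono_on (by norm_num : (1/2:ℝ) ≤ 1) hP2
      (hgc.intervalIntegrable _ _) (P_le_big hm)
    refine h.trans ?_
    have h2 : (∫ t in (1/2:ℝ)..1, g t) ≤ ∫ t in (0:ℝ)..1, g t := by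
      rw [← integral_add_adjacent_intervals (hgc.intervalIntegrable 0 (1/2))
        (hgc.intervalIntegrable (1/2) 1)]
      have h3 : 0 ≤ ∫ t in (0:ℝ)..(1/2), g t := by
        apply intervalIntegral.integral_nonneg (by norm_num)
        rintro t ⟨ht0, ht1⟩
        have htm : t^m ≤ t^(m-1) := by
          conv_lhs => rw [← Nat.sub_add_cancel hm]
          rw [pow_succ]
          nlinarith [pow_nonneg ht0 (m-1), pow_le_one₀ (n := m-1) ht0 (by linarith : t ≤ 1)]
        show (0:ℝ) ≤ 4*(m:ℝ)*(t^(m-1) - t^m)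
        nlinarith
      linarith
    refine h2.trans ?_
    have e1 : (∫ t in (0:ℝ)..1, t^(m-1)) = 1/(((m-1:ℕ):ℝ)+1) := by
      rw [integral_pow]; simp
    have e2 : (∫ t in (0:ℝ)..1, t^m) = 1/((m:ℝ)+1) := by
      rw [integral_pow]; simp
    have ecast : ((m-1:ℕ):ℝ) + 1 = (m:ℝ) := by
      rw [Nat.cast_sub hm]; push_cast; ring
    have hgint : (∫ t in (0:ℝ)..1, g t) = 4*(m:ℝ)*(1/(m:ℝ) - 1/((m:ℝ)+1)) := by
      rw [hg]
      rw [intervalIntegral.integral_const_mul]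
      rw [intervalIntegral.integral_sub ((continuous_pow _).intervalIntegrable _ _)
        ((continuous_pow _).intervalIntegrable _ _), e1, e2, ecast]
    rw [hgint]
    refine le_of_eq ?_
    field_simp
    ring
  linarith

lemma abs_F_sub_log {m : ℕ} (hm : 1 ≤ m) :
    |F m - Real.log m| ≤ (1/2:ℝ)^(m-1) + 4/((m:ℝ)+1) := by
  have h1 := F_sub_log hm
  have h2 : 0 ≤ ∫ t in (0:ℝ)..1, P m t :=
    intervalIntegral.integral_nonneg zero_le_one (P_nonneg m)
  have h3 := P_int_bound hm
  rw [abs_sub_comm, abs_of_nonneg (by linarith)]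
  linarith

lemma tendsto_F_sub_log :
    Tendsto (fun m : ℕ => F m - Real.log m) atTop (𝓝 0) := by
  have hg : Tendsto (fun m : ℕ => (1/2:ℝ)^(m-1) + 4/((m:ℝ)+1)) atTop (𝓝 0) := by
    have h1 : Tendsto (fun m : ℕ => (1/2:ℝ)^(m-1)) atTop (𝓝 0) :=
      (tendsto_pow_atTop_nhds_zero_of_lt_one (by norm_num) (by norm_num)).comp
        (tendsto_sub_atTop_nat 1)
    have h2 : Tendsto (fun m : ℕ => 4/((m:ℝ)+1)) atTop (𝓝 0) := by
      have h3 := tendsto_one_div_add_atTop_nhds_zero_nat.const_mul (4:ℝ)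
      simp only [mul_zero] at h3
      refine h3.congr fun n => ?_
      rw [mul_one_div]
    simpa using h1.add h2
  apply squeeze_zero_norm' ?_ hg
  filter_upwards [eventually_ge_atTop 1] with m hm
  simpa [Real.norm_eq_abs] using abs_F_sub_log hm

lemma F_harmonic (n : ℕ) : F (1 + (n:ℝ)) = F 1 + (harmonic n : ℝ) := by
  induction n with
  | zero => simp
  | succ n ih =>
    have h : (1 + ((n:ℕ)+1:ℕ) : ℝ) = (1 + (n:ℝ)) + 1 := by push_cast; ring
    rw [h, F_rec _ (by positivity), ih, harmonic_succ]
    push_cast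
    ring

lemma F_one : F 1 = -Real.eulerMascheroniConstant := by
  have h1 : Tendsto (fun n : ℕ => F ((n+1:ℕ):ℝ) - Real.log ((n+1:ℕ):ℝ)) atTop (𝓝 0) :=
    tendsto_F_sub_log.comp (tendsto_add_atTop_nat 1)
  have heq : (fun n : ℕ => F ((n+1:ℕ):ℝ) - Real.log ((n+1:ℕ):ℝ))
      = fun n : ℕ => F 1 + ((harmonic n : ℝ) - Real.log ((n:ℝ)+1)) := by
    funext n
    have h2 := F_harmonic n
    rw [add_comm (1:ℝ) (n:ℝ)] at h2
    push_cast
    rw [h2]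
    ring
  rw [heq] at h1
  have h3 : Tendsto (fun n : ℕ => F 1 + ((harmonic n : ℝ) - Real.log ((n:ℝ)+1))) atTop
      (𝓝 (F 1 + Real.eulerMascheroniConstant)) :=
    tendsto_const_nhds.add Real.tendsto_harmonic_sub_log_add_one
  have := tendsto_nhds_unique h1 h3
  linarith

lemma diffGamma {x : ℝ} (hx : 0 < x) : DifferentiableAt ℝ Real.Gamma x :=
  Real.differentiableAt_Gamma (fun m => by
    intro h; have : (0:ℝ) ≤ m := Nat.cast_nonneg m; rw [h] at hx; linarith)

lemma diffLogGamma {x : ℝ} (hx : 0 < x) :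
    DifferentiableAt ℝ (fun y => Real.log (Real.Gamma y)) x :=
  (diffGamma hx).log (Real.Gamma_ne_zero (fun m => by
    intro h; have : (0:ℝ) ≤ m := Nat.cast_nonneg m; rw [h] at hx; linarith))

lemma digamma_eq {x : ℝ} (hx : 0 < x) :
    digamma x = deriv (fun y => Real.log (Real.Gamma y)) x := by
  rw [digamma, deriv.log (diffGamma hx) (Real.Gamma_pos_of_pos hx).ne']

lemma digamma_rec : ∀ x : ℝ, 0 < x → digamma (x+1) = digamma x + 1/x := by
  intro x hx
  rw [digamma_eq (by linarith : (0:ℝ) < x + 1), digamma_eq hx]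
  rw [← deriv_comp_add_const, one_div, ← Real.deriv_log,
    ← deriv_add (diffLogGamma hx) (Real.differentiableAt_log hx.ne')]
  apply Filter.EventuallyEq.deriv_eq
  filter_upwards [eventually_gt_nhds hx] with y hy
  rw [Real.Gamma_add_one hy.ne', Real.log_mul hy.ne' (Real.Gamma_pos_of_pos hy).ne']
  simp only [Pi.add_apply]
  ring

lemma digamma_mono : ∀ x y : ℝ, 0 < x → x ≤ y → digamma x ≤ digamma y := by
  intro x y hx hxy
  rcases eq_or_lt_of_le hxy with rfl | hlt
  · exact le_refl _
  have hy : 0 < y := lt_trans hx hlt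
  have hc : ConvexOn ℝ (Ioi 0) (Real.log ∘ Real.Gamma) := Real.convexOn_log_Gamma
  have h1 := hc.deriv_le_slope (mem_Ioi.mpr hx) (mem_Ioi.mpr hy) hlt
    (by simpa [Function.comp_def] using diffLogGamma hx)
  have h2 := hc.slope_le_deriv (mem_Ioi.mpr hx) (mem_Ioi.mpr hy) hlt
    (by simpa [Function.comp_def] using diffLogGamma hy)
  rw [digamma_eq hx, digamma_eq hy]
  have : deriv (Real.log ∘ Real.Gamma) = deriv (fun y => Real.log (Real.Gamma y)) := by
    simp [Function.comp_def]
  rw [this] at h1 h2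
  linarith


lemma digamma_one : digamma 1 = -γ := by
  rw [digamma, Real.hasDerivAt_Gamma_one.deriv, Real.Gamma_one, div_one]

lemma unique (f g : ℝ → ℝ)
    (hfm : ∀ x y : ℝ, 0 < x → x ≤ y → f x ≤ f y)
    (hgm : ∀ x y : ℝ, 0 < x → x ≤ y → g x ≤ g y)
    (hfr : ∀ x : ℝ, 0 < x → f (x+1) = f x + 1/x)
    (hgr : ∀ x : ℝ, 0 < x → g (x+1) = g x + 1/x)
    (h1 : f 1 = g 1) {a : ℝ} (ha : 0 < a) : f a = g a := by
  have hs : ∀ (F : ℝ → ℝ), (∀ x : ℝ, 0 < x → F (x+1) = F x + 1/x) → ∀ x : ℝ, 0 < x →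
      ∀ n : ℕ, F (x + n) = F x + ∑ k ∈ Finset.range n, 1/(x + k) := by
    intro F hF x hx n
    induction n with
    | zero => simp
    | succ n ih =>
      have hxn : (0:ℝ) < x + n := by positivity
      have h' : (x + ((n:ℕ)+1:ℕ) : ℝ) = (x + n) + 1 := by push_cast; ring
      rw [h', hF (x+n) hxn, ih, Finset.sum_range_succ]; ring
  obtain ⟨j, hj⟩ : ∃ j : ℕ, Nat.ceil a = j + 1 :=
    ⟨Nat.ceil a - 1, (Nat.succ_pred_eq_of_pos (Nat.ceil_pos.mpr ha)).symm⟩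
  have haj : a ≤ (j:ℝ) + 1 := by
    have h := Nat.le_ceil a; rw [hj] at h; push_cast at h; linarith
  have hja : (j:ℝ) ≤ a := by
    have h := Nat.ceil_lt_add_one ha.le; rw [hj] at h; push_cast at h; linarith
  have key : ∀ n : ℕ, |f a - g a| ≤ 1/((n:ℝ)+1) := by
    intro n
    set S : ℕ → ℝ := fun m => ∑ k ∈ Finset.range m, 1/(1 + (k:ℝ)) with hS
    have hSstep : S (j+n+1) = S (j+n) + 1/(1+((j+n:ℕ):ℝ)) := by
      simp only [hS, Finset.sum_range_succ]
    have hfI : ∀ m : ℕ, f (1 + (m:ℝ)) = f 1 + S m := fun m => hs f hfr 1 one_pos m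
    have hgI : ∀ m : ℕ, g (1 + (m:ℝ)) = g 1 + S m := fun m => hs g hgr 1 one_pos m
    have hfA : f (a + ((n+1:ℕ):ℝ)) = f a + ∑ k ∈ Finset.range (n+1), 1/(a+k) :=
      hs f hfr a ha (n+1)
    have hgA : g (a + ((n+1:ℕ):ℝ)) = g a + ∑ k ∈ Finset.range (n+1), 1/(a+k) :=
      hs g hgr a ha (n+1)
    have p1 : (0:ℝ) < 1 + ((j+n:ℕ):ℝ) := by positivity
    have c1 : f (1 + ((j+n:ℕ):ℝ)) ≤ f (a + ((n+1:ℕ):ℝ)) :=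
      hfm _ _ p1 (by push_cast; linarith)
    have c2 : f (a + ((n+1:ℕ):ℝ)) ≤ f (1 + ((j+n+1:ℕ):ℝ)) :=
      hfm _ _ (by positivity) (by push_cast; linarith)
    have d1 : g (1 + ((j+n:ℕ):ℝ)) ≤ g (a + ((n+1:ℕ):ℝ)) :=
      hgm _ _ p1 (by push_cast; linarith)
    have d2 : g (a + ((n+1:ℕ):ℝ)) ≤ g (1 + ((j+n+1:ℕ):ℝ)) :=
      hgm _ _ (by positivity) (by push_cast; linarith)
    rw [hfI, hfA] at c1
    rw [hfA, hfI, hSstep] at c2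
    rw [hgI, hgA] at d1
    rw [hgA, hgI, hSstep] at d2
    have hb : |f a - g a| ≤ 1/(1+((j+n:ℕ):ℝ)) := by
      rw [abs_le]; constructor <;> [linarith; linarith]
    refine hb.trans ?_
    apply one_div_le_one_div_of_le (by positivity)
    push_cast; linarith [Nat.cast_nonneg (α := ℝ) j]
  by_contra hne
  have hd : 0 < |f a - g a| := abs_pos.mpr (sub_ne_zero.mpr hne)
  obtain ⟨n, hn⟩ := exists_nat_gt (1/|f a - g a|)
  have hk := key n
  have h2 : 1/((n:ℝ)+1) < |f a - g a| := by
    rw [div_lt_iff₀ (by positivity)]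
    rw [div_lt_iff₀ hd] at hn
    nlinarith
  linarith


end DigammaProof

theorem integral_exp_sub_rpow_unit_interval_eq_digamma (a : ℝ) (ha : 0 < a) :
    ∫ t in (0 : ℝ)..1, (Real.exp (1 - 1 / t) - t ^ a) / (t * (1 - t)) = digamma a := by
  have h := DigammaProof.unique DigammaProof.F digamma DigammaProof.F_mono
    DigammaProof.digamma_mono DigammaProof.F_rec DigammaProof.digamma_rec
    (by rw [DigammaProof.F_one, DigammaProof.digamma_one]) ha
  simpa [DigammaProof.F] using h
end

section
/- For all real numbers p > 0 and q > 0, ∫_0^∞ (e^{-x^p} - e^{-x^q}) dx/x = ((p - q)/(p q)) · γ. -/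
open MeasureTheory Real

open Set

lemma integral_log_mul_exp_neg : ∫ u in Set.Ioi (0:ℝ), Real.log u * Real.exp (-u)
    = -Real.eulerMascheroniConstant := by
  have h1 : HasDerivAt Complex.GammaIntegral
      (∫ t : ℝ in Ioi 0, (t:ℂ) ^ ((1:ℂ) - 1) * (Real.log t * Real.exp (-t))) 1 :=
    Complex.hasDerivAt_GammaIntegral (by norm_num)
  have h2 : HasDerivAt Complex.GammaIntegral (-(Real.eulerMascheroniConstant : ℂ)) 1 := by
    refine Complex.hasDerivAt_Gamma_one.congr_of_eventuallyEq ?_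
    have hopen : IsOpen {s : ℂ | 0 < s.re} := isOpen_lt continuous_const Complex.continuous_re
    filter_upwards [hopen.mem_nhds (by norm_num : (0:ℝ) < (1:ℂ).re)] with s hs
    exact (Complex.Gamma_eq_integral hs).symm
  have h3 := h1.unique h2
  set I : ℝ := ∫ u in Set.Ioi (0:ℝ), Real.log u * Real.exp (-u) with hI
  have h4 : (∫ t : ℝ in Ioi 0, (t:ℂ) ^ ((1:ℂ) - 1) * (Real.log t * Real.exp (-t)))
      = (I : ℂ) := by
    refine Eq.trans ?_ (integral_ofReal (f := fun u => Real.log u * Real.exp (-u)))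
    refine setIntegral_congr_fun measurableSet_Ioi fun t _ => ?_
    rw [sub_self, Complex.cpow_zero, one_mul]
    exact (Complex.ofReal_mul _ _).symm
  rw [h4] at h3
  exact_mod_cast h3

lemma integral_rpow_mul_log_mul_exp_neg_rpow {s : ℝ} (hs : 0 < s) :
    ∫ x in Set.Ioi (0:ℝ), x ^ (s - 1) * Real.log x * Real.exp (-(x ^ s))
      = -Real.eulerMascheroniConstant / s ^ 2 := by
  have key := integral_comp_rpow_Ioi_of_pos
    (g := fun u => (Real.log u * Real.exp (-u)) / s ^ 2) hs
  rw [integral_div, integral_log_mul_exp_neg] at key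
  rw [← key]
  refine setIntegral_congr_fun measurableSet_Ioi fun x hx => ?_
  have hx0 : (0:ℝ) < x := hx
  rw [smul_eq_mul, Real.log_rpow hx0]
  rw [Real.rpow_sub_one hx0.ne']
  field_simp

lemma integrableOn_rpow_mul_exp_neg_rpow' {c q : ℝ} (hc : 0 < c) (hq : 0 < q) :
    IntegrableOn (fun x : ℝ => x ^ (c - 1) * Real.exp (-(x ^ q))) (Set.Ioi 0) := by
  have h0 : IntegrableOn (fun u : ℝ => u ^ (c / q - 1) * Real.exp (-u)) (Set.Ioi 0) := by
    refine (Real.GammaIntegral_convergent (div_pos hc hq)).congr_fun (fun u _ => ?_)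
      measurableSet_Ioi
    ring
  have := (integrableOn_Ioi_comp_rpow_iff'
    (fun u : ℝ => u ^ (c / q - 1) * Real.exp (-u)) hq.ne').mpr h0
  refine this.congr_fun (fun x hx => ?_) measurableSet_Ioi
  have hx0 : (0:ℝ) < x := hx
  dsimp only; rw [smul_eq_mul, ← Real.rpow_mul hx0.le]
  rw [show q * (c / q - 1) = c - q by field_simp, ← mul_assoc, ← Real.rpow_add hx0]
  ring_nf

lemma integrableOn_rpow_mul_abs_log_mul_exp_neg_rpow {a q : ℝ} (ha : 0 < a) (hq : 0 < q) :
    IntegrableOn (fun x : ℝ => x ^ (a - 1) * |Real.log x| * Real.exp (-(x ^ q)))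
      (Set.Ioi 0) := by
  set ε : ℝ := a / 2 with hε
  have hε0 : 0 < ε := by positivity
  have hbound : ∀ x : ℝ, 0 < x → |Real.log x| ≤ (x ^ ε + x ^ (-ε)) / ε := by
    intro x hx
    rw [le_div_iff₀ hε0]
    have k1 : Real.log x * ε ≤ x ^ ε - 1 := by
      calc Real.log x * ε = Real.log (x ^ ε) := by rw [Real.log_rpow hx]; ring
        _ ≤ x ^ ε - 1 := Real.log_le_sub_one_of_pos (Real.rpow_pos_of_pos hx _)
    have k2 : -(Real.log x * ε) ≤ x ^ (-ε) - 1 := by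
      calc -(Real.log x * ε) = Real.log (x ^ (-ε)) := by rw [Real.log_rpow hx]; ring
        _ ≤ x ^ (-ε) - 1 := Real.log_le_sub_one_of_pos (Real.rpow_pos_of_pos hx _)
    have k3 := (Real.rpow_pos_of_pos hx ε).le
    have k4 := (Real.rpow_pos_of_pos hx (-ε)).le
    rcases abs_cases (Real.log x) with ⟨h, _⟩ | ⟨h, _⟩ <;> rw [h] <;> nlinarith
  have hg : IntegrableOn (fun x : ℝ =>
      (x ^ (a + ε - 1) * Real.exp (-(x ^ q)) + x ^ (a - ε - 1) * Real.exp (-(x ^ q))) / ε)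
      (Set.Ioi 0) := by
    refine (Integrable.add ?_ ?_).div_const ε
    · exact integrableOn_rpow_mul_exp_neg_rpow' (by linarith) hq
    · exact integrableOn_rpow_mul_exp_neg_rpow' (by simp [hε]; linarith) hq
  refine hg.mono' ?_ ?_
  · apply ContinuousOn.aestronglyMeasurable ?_ measurableSet_Ioi
    refine ContinuousOn.mul (ContinuousOn.mul ?_ ?_) ?_
    · exact fun x hx => (Real.continuousAt_rpow_const x _ (Or.inl (ne_of_gt hx))).continuousWithinAt
    · exact continuous_abs.comp_continuousOn (Real.continuousOn_log.mono (by
        intro x hx; exact ne_of_gt hx))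
    · refine (Real.continuous_exp.comp_continuousOn ?_)
      exact (ContinuousOn.neg (fun x hx =>
        (Real.continuousAt_rpow_const x _ (Or.inl (ne_of_gt hx))).continuousWithinAt))
  · rw [ae_restrict_iff' measurableSet_Ioi]
    filter_upwards with x hx
    have hx0 : (0:ℝ) < x := hx
    have h1 : 0 < Real.exp (-(x ^ q)) := Real.exp_pos _
    have h2 : (0:ℝ) ≤ x ^ (a - 1) := (Real.rpow_pos_of_pos hx0 _).le
    rw [Real.norm_eq_abs, abs_of_nonneg (by positivity)]
    have := hbound x hx0
    calc x ^ (a - 1) * |Real.log x| * Real.exp (-(x ^ q))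
        ≤ x ^ (a - 1) * ((x ^ ε + x ^ (-ε)) / ε) * Real.exp (-(x ^ q)) := by
          gcongr
      _ = (x ^ (a - 1) * x ^ ε * Real.exp (-(x ^ q))
            + x ^ (a - 1) * x ^ (-ε) * Real.exp (-(x ^ q))) / ε := by ring
      _ = (x ^ (a + ε - 1) * Real.exp (-(x ^ q)) + x ^ (a - ε - 1) * Real.exp (-(x ^ q))) / ε := by
          rw [← Real.rpow_add hx0, ← Real.rpow_add hx0]; ring_nf

lemma frullani_aux (p q : ℝ) (hq : 0 < q) (hpq : q ≤ p) :
    ∫ x in Set.Ioi (0 : ℝ), (Real.exp (-(x ^ p)) - Real.exp (-(x ^ q))) / x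
      = ((p - q) / (p * q)) * Real.eulerMascheroniConstant := by
  have hp : 0 < p := lt_of_lt_of_le hq hpq
  set g : ℝ → ℝ → ℝ := fun x s => -(x ^ (s - 1) * Real.log x * Real.exp (-(x ^ s))) with hg
  -- Step A: pointwise identity
  have hpoint : ∀ x ∈ Set.Ioi (0:ℝ),
      (Real.exp (-(x ^ p)) - Real.exp (-(x ^ q))) / x = ∫ s in Set.Ioc q p, g x s := by
    intro x hx
    have hx0 : (0:ℝ) < x := hx
    have hcont : Continuous fun s : ℝ => x ^ s := by
      have : (fun s : ℝ => x ^ s) = fun s => Real.exp (Real.log x * s) :=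
        funext fun s => Real.rpow_def_of_pos hx0 s
      rw [this]; fun_prop
    have hderiv : ∀ s ∈ Set.uIcc q p, HasDerivAt (fun s => Real.exp (-(x ^ s)))
        (-(x ^ s * Real.log x * Real.exp (-(x ^ s)))) s := by
      intro s _
      have h1 := ((Real.hasStrictDerivAt_const_rpow hx0 s).hasDerivAt).neg.exp
      convert h1 using 1
      · rfl
      · simp only [Pi.neg_apply]; ring
    have hii : IntervalIntegrable (fun s => -(x ^ s * Real.log x * Real.exp (-(x ^ s))))
        MeasureTheory.volume q p := by
      exact (((hcont.mul continuous_const).mul (Real.continuous_exp.comp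
        hcont.neg)).neg).intervalIntegrable q p
    have eq1 := intervalIntegral.integral_eq_sub_of_hasDerivAt hderiv hii
    rw [← eq1, intervalIntegral.integral_of_le hpq, ← integral_div]
    refine setIntegral_congr_fun measurableSet_Ioc fun s _ => ?_
    simp only [hg]
    rw [Real.rpow_sub_one hx0.ne']
    field_simp
  -- the dominating function
  set G : ℝ → ℝ := fun x => Real.exp 1 * (x ^ (q - 1) * |Real.log x| * Real.exp (-(x ^ q)))
      + x ^ (p - 1) * |Real.log x| * Real.exp (-(x ^ q)) with hG
  have hGint : IntegrableOn G (Set.Ioi 0) := by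
    exact ((integrableOn_rpow_mul_abs_log_mul_exp_neg_rpow hq hq).const_mul _).add
      (integrableOn_rpow_mul_abs_log_mul_exp_neg_rpow hp hq)
  -- Fubini integrability
  have hInt : Integrable (Function.uncurry g)
      ((MeasureTheory.volume.restrict (Set.Ioi 0)).prod
        (MeasureTheory.volume.restrict (Set.Ioc q p))) := by
    have hmeas : AEStronglyMeasurable (Function.uncurry g)
        ((MeasureTheory.volume.restrict (Set.Ioi 0)).prod
          (MeasureTheory.volume.restrict (Set.Ioc q p))) := by
      rw [Measure.prod_restrict]
      refine ContinuousOn.aestronglyMeasurable ?_ (measurableSet_Ioi.prod measurableSet_Ioc)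
      intro z hz
      have hz1 : 0 < z.1 := hz.1
      refine ContinuousAt.continuousWithinAt ?_
      have haux : ContinuousAt (fun w : ℝ × ℝ => (w.1, w.2 - 1)) z :=
        continuousAt_fst.prodMk (continuousAt_snd.sub continuousAt_const)
      have c1 : ContinuousAt (fun w : ℝ × ℝ => w.1 ^ (w.2 - 1)) z :=
        ContinuousAt.comp (g := fun v : ℝ × ℝ => v.1 ^ v.2)
          (f := fun w : ℝ × ℝ => (w.1, w.2 - 1)) (x := z)
          (Real.continuousAt_rpow (z.1, z.2 - 1) (Or.inl hz1.ne')) haux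
      have c2 : ContinuousAt (fun w : ℝ × ℝ => w.1 ^ w.2) z :=
        Real.continuousAt_rpow z (Or.inl hz1.ne')
      have c3 : ContinuousAt (fun w : ℝ × ℝ => Real.log w.1) z :=
        (Real.continuousAt_log hz1.ne').comp continuousAt_fst
      exact ((c1.mul c3).mul (Real.continuous_exp.continuousAt.comp c2.neg)).neg
    have hbd : Integrable (fun z : ℝ × ℝ => G z.1 * (1:ℝ))
        ((MeasureTheory.volume.restrict (Set.Ioi 0)).prod
          (MeasureTheory.volume.restrict (Set.Ioc q p))) :=
      hGint.mul_prod (integrableOn_const measure_Ioc_lt_top.ne)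
    refine hbd.mono' hmeas ?_
    rw [Measure.prod_restrict, ae_restrict_iff' (measurableSet_Ioi.prod measurableSet_Ioc)]
    filter_upwards with z hz
    obtain ⟨hx, hs⟩ := hz
    have hx0 : (0:ℝ) < z.1 := hx
    set x := z.1
    set s := z.2
    have hqs : q ≤ s := hs.1.le
    have hsp : s ≤ p := hs.2
    have hnorm : ‖Function.uncurry g z‖ = x ^ (s - 1) * |Real.log x| * Real.exp (-(x ^ s)) := by
      simp only [Function.uncurry, hg, norm_neg, Real.norm_eq_abs, abs_mul,
        abs_of_nonneg (Real.rpow_pos_of_pos hx0 (s-1)).le,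
        abs_of_nonneg (Real.exp_pos (-(x ^ s))).le]
      rw [abs_of_nonneg (Real.rpow_pos_of_pos hx0 _).le, abs_of_nonneg (Real.exp_pos _).le]
    rw [hnorm, mul_one]
    simp only [hG]
    have habs : (0:ℝ) ≤ |Real.log x| := abs_nonneg _
    rcases le_total x 1 with hx1 | hx1
    · have t1 : x ^ (s - 1) ≤ x ^ (q - 1) :=
        Real.rpow_le_rpow_of_exponent_ge hx0 hx1 (by linarith)
      have t2 : Real.exp (-(x ^ s)) ≤ Real.exp 1 * Real.exp (-(x ^ q)) := by
        rw [← Real.exp_add]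
        have h1 : x ^ q ≤ 1 := Real.rpow_le_one hx0.le hx1 hq.le
        have h2 : (0:ℝ) ≤ x ^ s := (Real.rpow_pos_of_pos hx0 s).le
        exact Real.exp_le_exp.mpr (by linarith)
      have tpos : (0:ℝ) ≤ x ^ (p - 1) * |Real.log x| * Real.exp (-(x ^ q)) := by positivity
      calc x ^ (s - 1) * |Real.log x| * Real.exp (-(x ^ s))
          ≤ x ^ (q - 1) * |Real.log x| * (Real.exp 1 * Real.exp (-(x ^ q))) := by gcongr
        _ ≤ _ := by nlinarith
    · have t1 : x ^ (s - 1) ≤ x ^ (p - 1) :=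
        Real.rpow_le_rpow_of_exponent_le hx1 (by linarith)
      have t2 : Real.exp (-(x ^ s)) ≤ Real.exp (-(x ^ q)) := by
        have : x ^ q ≤ x ^ s := Real.rpow_le_rpow_of_exponent_le hx1 hqs
        exact Real.exp_le_exp.mpr (by linarith)
      have tpos : (0:ℝ) ≤ Real.exp 1 * (x ^ (q - 1) * |Real.log x| * Real.exp (-(x ^ q))) := by
        positivity
      calc x ^ (s - 1) * |Real.log x| * Real.exp (-(x ^ s))
          ≤ x ^ (p - 1) * |Real.log x| * Real.exp (-(x ^ q)) := by gcongr
        _ ≤ _ := by linarith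
  -- put it together
  rw [setIntegral_congr_fun measurableSet_Ioi hpoint]
  rw [integral_integral_swap hInt]
  have hinner : ∀ s ∈ Set.Ioc q p,
      (∫ x in Set.Ioi (0:ℝ), g x s) = Real.eulerMascheroniConstant / s ^ 2 := by
    intro s hs
    have hs0 : 0 < s := lt_trans hq hs.1
    rw [hg]
    simp only
    rw [integral_neg, integral_rpow_mul_log_mul_exp_neg_rpow hs0]
    rw [neg_div, neg_neg]
  rw [setIntegral_congr_fun measurableSet_Ioc hinner]
  -- final integral
  have hfinal : ∫ s in Set.Ioc q p, Real.eulerMascheroniConstant / s ^ 2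
      = Real.eulerMascheroniConstant * (q⁻¹ - p⁻¹) := by
    rw [← intervalIntegral.integral_of_le hpq]
    simp_rw [div_eq_mul_inv]
    rw [intervalIntegral.integral_const_mul]
    have hderiv : ∀ s ∈ Set.uIcc q p, HasDerivAt (fun s : ℝ => -s⁻¹) ((s ^ 2)⁻¹) s := by
      intro s hs
      rw [Set.uIcc_of_le hpq] at hs
      have hs0 : 0 < s := lt_of_lt_of_le hq hs.1
      simpa [Pi.neg_def] using (hasDerivAt_inv hs0.ne').neg
    have hii : IntervalIntegrable (fun s : ℝ => (s ^ 2)⁻¹) MeasureTheory.volume q p := by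
      refine ContinuousOn.intervalIntegrable ?_
      refine ContinuousOn.inv₀ ((continuous_pow 2).continuousOn) fun s hs => ?_
      rw [Set.uIcc_of_le hpq] at hs
      have hs0 : 0 < s := lt_of_lt_of_le hq hs.1
      positivity
    rw [intervalIntegral.integral_eq_sub_of_hasDerivAt hderiv hii]
    ring
  rw [hfinal]
  field_simp

theorem integral_exp_rpow_sub_exp_rpow_div (p q : ℝ) (hp : 0 < p) (hq : 0 < q) :
    ∫ x in Set.Ioi (0 : ℝ), (Real.exp (-(x ^ p)) - Real.exp (-(x ^ q))) / x
      = ((p - q) / (p * q)) * Real.eulerMascheroniConstant := by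
  rcases le_total q p with h | h
  · exact frullani_aux p q hq h
  · have key := frullani_aux q p hp h
    have hneg : ∫ x in Set.Ioi (0 : ℝ), (Real.exp (-(x ^ p)) - Real.exp (-(x ^ q))) / x
        = -∫ x in Set.Ioi (0 : ℝ), (Real.exp (-(x ^ q)) - Real.exp (-(x ^ p))) / x := by
      rw [← integral_neg]
      refine setIntegral_congr_fun measurableSet_Ioi fun x _ => ?_
      ring
    rw [hneg, key]
    ring
end

section
/- For every real number a > 0, the digamma function admits the integral representation ψ(a) = ∫_0^∞ (e^{-x}/x - e^{-ax}/(1 - e^{-x})) dx. -/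
open MeasureTheory Real

open Set Filter Topology

namespace DigammaAux

/-- integrand of the Gauss integral -/
noncomputable def Fi (a x : ℝ) : ℝ := exp (-x) / x - exp (-(a * x)) / (1 - exp (-x))

noncomputable def F (a : ℝ) : ℝ := ∫ x in Ioi (0:ℝ), Fi a x

lemma one_sub_exp_pos {x : ℝ} (hx : 0 < x) : 0 < 1 - exp (-x) := by
  have : exp (-x) < 1 := exp_lt_one_iff.mpr (by linarith)
  linarith

lemma one_sub_exp_le {x : ℝ} (hx : 0 < x) : 1 - exp (-x) ≤ x := by
  nlinarith [add_one_le_exp (-x)]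

lemma key_ineq {x : ℝ} (hx : 0 ≤ x) : (1 + x) * exp (-x) ≤ 1 := by
  have h := add_one_le_exp x
  have he := exp_pos x
  rw [exp_neg, ← div_eq_mul_inv, div_le_one he]
  linarith

lemma D_lb {x : ℝ} (hx : 0 < x) : 1 / x ≤ 1 / (1 - exp (-x)) :=
  one_div_le_one_div_of_le (one_sub_exp_pos hx) (one_sub_exp_le hx)

lemma D_ub {x : ℝ} (hx : 0 < x) : 1 / (1 - exp (-x)) ≤ 1 / x + 1 := by
  have h1 := one_sub_exp_pos hx
  have h2 := key_ineq hx.le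
  rw [div_add' _ _ _ hx.ne', div_le_div_iff₀ h1 hx]
  nlinarith

lemma exp_sub_exp_le {u v : ℝ} (h : u ≤ v) : exp (-u) - exp (-v) ≤ (v - u) * exp (-u) := by
  have h1 : exp (-v) = exp (-u) * exp (-(v-u)) := by rw [← exp_add]; ring_nf
  have h2 : 1 - (v - u) ≤ exp (-(v-u)) := by have := add_one_le_exp (-(v-u)); linarith
  nlinarith [exp_pos (-u)]

lemma exp_sub_exp_nonneg {u v : ℝ} (h : u ≤ v) : 0 ≤ exp (-u) - exp (-v) := by
  have := exp_le_exp.mpr (neg_le_neg h); linarith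

lemma abs_exp_sub_exp {a x : ℝ} (ha : 0 < a) (hx : 0 < x) :
    |exp (-x) - exp (-(a*x))| ≤ |a - 1| * x * exp (-(min a 1 * x)) := by
  rcases le_total 1 a with h | h
  · rw [min_eq_right h, abs_of_nonneg (exp_sub_exp_nonneg (by nlinarith)),
      abs_of_nonneg (by linarith)]
    have := exp_sub_exp_le (show x ≤ a * x by nlinarith)
    calc exp (-x) - exp (-(a*x)) ≤ (a*x - x) * exp (-x) := this
    _ = (a-1) * x * exp (-(1*x)) := by ring_nf
  · rw [min_eq_left h, abs_of_nonpos (by have := exp_sub_exp_nonneg (show a*x ≤ x by nlinarith); linarith),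
      abs_of_nonpos (by linarith)]
    have := exp_sub_exp_le (show a * x ≤ x by nlinarith)
    calc -(exp (-x) - exp (-(a*x))) = exp (-(a*x)) - exp (-x) := by ring
    _ ≤ (x - a*x) * exp (-(a*x)) := this
    _ = -(a-1) * x * exp (-(a*x)) := by ring

lemma x_exp_le {m x : ℝ} (hm : 0 < m) (hx : 0 ≤ x) : x * exp (-(m * x)) ≤ 2 / m * exp (-(m/2 * x)) := by
  have h1 : m/2 * x ≤ exp (m/2 * x) := by
    have := add_one_le_exp (m/2*x); nlinarith
  have h2 : exp (-(m*x)) = exp (-(m/2*x)) * exp (-(m/2*x)) := by rw [← exp_add]; ring_nf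
  have h3 : exp (-(m/2*x)) = (exp (m/2*x))⁻¹ := by rw [← exp_neg]
  have he := exp_pos (m/2*x)
  have h4 : x * exp (-(m/2*x)) ≤ 2/m := by
    rw [h3, ← div_eq_mul_inv, div_le_div_iff₀ he hm]
    nlinarith
  calc x * exp (-(m*x)) = (x * exp (-(m/2*x))) * exp (-(m/2*x)) := by rw [h2]; ring
  _ ≤ 2/m * exp (-(m/2*x)) := by
      have := exp_pos (-(m/2*x)); nlinarith

lemma cont_Fi (a : ℝ) : ContinuousOn (Fi a) (Ioi 0) := by
  apply ContinuousOn.sub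
  · exact ContinuousOn.div (by fun_prop) continuousOn_id (fun x hx => ne_of_gt hx)
  · exact ContinuousOn.div (by fun_prop) (by fun_prop) (fun x hx => (one_sub_exp_pos hx).ne')

lemma Fi_bound {a : ℝ} (ha : 0 < a) {x : ℝ} (hx : 0 < x) :
    |Fi a x| ≤ (1 + |a-1| * (1 + 2 / min a 1)) * exp (-(min a 1 / 2) * x) := by
  set m := min a 1 with hm_def
  have hm : 0 < m := lt_min ha one_pos
  have hm1 : m ≤ 1 := min_le_right _ _
  have h1e := one_sub_exp_pos hx
  have hsplit : Fi a x = exp (-x) * (1/x - 1/(1 - exp (-x)))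
      + (exp (-x) - exp (-(a*x))) * (1/(1 - exp (-x))) := by
    simp only [Fi]; field_simp; ring
  have hb1 : |exp (-x) * (1/x - 1/(1 - exp (-x)))| ≤ exp (-(m/2) * x) := by
    rw [abs_mul, abs_of_pos (exp_pos _)]
    have habs : |1/x - 1/(1 - exp (-x))| ≤ 1 := by
      rw [abs_le]; constructor
      · have := D_ub hx; linarith
      · have := D_lb hx; linarith
    have hexp : exp (-x) ≤ exp (-(m/2) * x) := by
      apply exp_le_exp.mpr; nlinarith
    nlinarith [exp_pos (-x)]
  have hb2 : |(exp (-x) - exp (-(a*x))) * (1/(1 - exp (-x)))|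
      ≤ |a-1| * (1 + 2/m) * exp (-(m/2) * x) := by
    rw [abs_mul, abs_of_pos (by positivity : (0:ℝ) < 1/(1 - exp (-x)))]
    have h2 : |exp (-x) - exp (-(a*x))| * (1/(1 - exp (-x)))
        ≤ (|a-1| * x * exp (-(m * x))) * (1/x + 1) := by
      apply mul_le_mul (abs_exp_sub_exp ha hx) (D_ub hx) (by positivity) (by positivity)
    refine h2.trans ?_
    have hx1 : (|a-1| * x * exp (-(m * x))) * (1/x + 1)
        = |a-1| * (exp (-(m*x)) + x * exp (-(m*x))) := by
      field_simp
    rw [hx1]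
    have e1 : exp (-(m*x)) ≤ exp (-(m/2)*x) := by apply exp_le_exp.mpr; nlinarith
    have e2 := x_exp_le hm hx.le
    have : exp (-(m*x)) + x * exp (-(m*x)) ≤ (1 + 2/m) * exp (-(m/2)*x) := by
      have : exp (-(m/2 * x)) = exp (-(m/2)*x) := by ring_nf
      rw [← this]; nlinarith [exp_pos (-(m/2*x))]
    nlinarith [abs_nonneg (a-1), exp_pos (-(m/2)*x), mul_le_mul_of_nonneg_left this (abs_nonneg (a-1))]
  calc |Fi a x| ≤ |exp (-x) * (1/x - 1/(1 - exp (-x)))|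
      + |(exp (-x) - exp (-(a*x))) * (1/(1 - exp (-x)))| := by rw [hsplit]; exact abs_add_le _ _
  _ ≤ exp (-(m/2) * x) + |a-1| * (1 + 2/m) * exp (-(m/2) * x) := add_le_add hb1 hb2
  _ = (1 + |a-1| * (1 + 2/m)) * exp (-(m/2) * x) := by ring

lemma integrableFi {a : ℝ} (ha : 0 < a) : IntegrableOn (Fi a) (Ioi 0) := by
  have hm : 0 < min a 1 / 2 := by positivity
  refine Integrable.mono'
    ((exp_neg_integrableOn_Ioi 0 hm).const_mul (1 + |a-1| * (1 + 2 / min a 1)))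
    ((cont_Fi a).aestronglyMeasurable measurableSet_Ioi) ?_
  filter_upwards [ae_restrict_mem measurableSet_Ioi] with x hx
  simpa [Real.norm_eq_abs] using Fi_bound ha hx

/-- `∫ x in Ioi 0, exp (-(a*x)) = 1/a` -/
lemma integral_exp_neg_mul {a : ℝ} (ha : 0 < a) :
    ∫ x in Ioi (0:ℝ), exp (-(a*x)) = 1/a := by
  have h : ∀ x ∈ Ioi (0:ℝ), HasDerivAt (fun x => -exp (-(a*x))/a) (exp (-(a*x))) x := by
    intro x _
    have h1 : HasDerivAt (fun x : ℝ => -(a*x)) (-a) x := by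
      simpa using ((hasDerivAt_id x).const_mul a).fun_neg
    have h2 := (h1.exp.fun_neg).div_const a
    exact h2.congr_deriv (by field_simp)
  have hint : IntegrableOn (fun x => exp (-(a*x))) (Ioi (0:ℝ)) := by
    simpa [neg_mul] using exp_neg_integrableOn_Ioi 0 ha
  have htend : Tendsto (fun x => -exp (-(a*x))/a) atTop (𝓝 0) := by
    have : Tendsto (fun x : ℝ => a * x) atTop atTop :=
      (tendsto_id.const_mul_atTop ha)
    have h2 : Tendsto (fun x : ℝ => exp (-(a*x))) atTop (𝓝 0) := by
      apply Tendsto.comp tendsto_exp_neg_atTop_nhds_zero this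
    have := (h2.neg).div_const a
    simpa using this
  have hcont : ContinuousWithinAt (fun x => -exp (-(a*x))/a) (Ici (0:ℝ)) 0 :=
    (Continuous.continuousWithinAt (by fun_prop))
  have := integral_Ioi_of_hasDerivAt_of_tendsto hcont h hint htend
  rw [this]
  simp [neg_div, one_div]

lemma F_add_one {a : ℝ} (ha : 0 < a) : F (a+1) = F a + 1/a := by
  have h1 := integrableFi ha
  have h2 := integrableFi (by linarith : (0:ℝ) < a+1)
  have key : ∫ x in Ioi (0:ℝ), (Fi (a+1) x - Fi a x) = 1/a := by
    rw [setIntegral_congr_fun measurableSet_Ioi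
      (show EqOn (fun x => Fi (a+1) x - Fi a x) (fun x => exp (-(a*x))) (Ioi 0) by
        intro x hx
        have h0 := (one_sub_exp_pos hx).ne'
        simp only [Fi]
        have he : exp (-((a+1)*x)) = exp (-(a*x)) * exp (-x) := by
          rw [← exp_add]; ring_nf
        field_simp
        rw [mul_comm x (a+1), he, mul_comm x a]; ring)]
    exact integral_exp_neg_mul ha
  have := integral_sub h2 h1
  rw [key] at this
  simp only [F]
  linarith [this]

lemma F_mono {a b : ℝ} (ha : 0 < a) (hab : a ≤ b) : F a ≤ F b := by
  apply setIntegral_mono_on (integrableFi ha) (integrableFi (lt_of_lt_of_le ha hab))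
    measurableSet_Ioi
  intro x hx
  simp only [Fi]
  have h1 := one_sub_exp_pos hx
  have h2 : exp (-(b*x)) ≤ exp (-(a*x)) := by
    apply exp_le_exp.mpr; nlinarith [mem_Ioi.mp hx]
  exact sub_le_sub_left ((div_le_div_iff_of_pos_right h1).mpr h2) _

/-- Frullani integrand -/
noncomputable def Gi (a x : ℝ) : ℝ := (exp (-x) - exp (-(a * x))) / x
noncomputable def G (a : ℝ) : ℝ := ∫ x in Ioi (0:ℝ), Gi a x

lemma cont_Gi (a : ℝ) : ContinuousOn (Gi a) (Ioi 0) :=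
  ContinuousOn.div (by fun_prop) continuousOn_id (fun x hx => ne_of_gt hx)

lemma Gi_bound {a : ℝ} (ha : 0 < a) {x : ℝ} (hx : 0 < x) :
    |Gi a x| ≤ |a-1| * exp (-(min a 1) * x) := by
  have h := abs_exp_sub_exp ha hx
  simp only [Gi, abs_div, abs_of_pos hx]
  rw [div_le_iff₀ hx]
  calc |exp (-x) - exp (-(a*x))| ≤ |a - 1| * x * exp (-(min a 1 * x)) := h
  _ = |a-1| * exp (-(min a 1) * x) * x := by ring_nf

lemma integrableGi {a : ℝ} (ha : 0 < a) : IntegrableOn (Gi a) (Ioi 0) := by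
  have hm : 0 < min a 1 := lt_min ha one_pos
  refine Integrable.mono' ((exp_neg_integrableOn_Ioi 0 hm).const_mul (|a-1|))
    ((cont_Gi a).aestronglyMeasurable measurableSet_Ioi) ?_
  filter_upwards [ae_restrict_mem measurableSet_Ioi] with x hx
  simpa [Real.norm_eq_abs] using Gi_bound ha hx

lemma G_hasDeriv {b : ℝ} (hb : 0 < b) : HasDerivAt G (1/b) b := by
  have hball : ∀ c ∈ Metric.ball b (b/2), b/2 < c := by
    intro c hc
    rw [Metric.mem_ball, Real.dist_eq, abs_lt] at hc
    linarith [hc.1]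
  have hmain := hasDerivAt_integral_of_dominated_loc_of_deriv_le
    (F := fun c x => Gi c x) (F' := fun c x => exp (-(c*x)))
    (bound := fun x => exp (-(b/2) * x)) (x₀ := b)
    (μ := volume.restrict (Ioi (0:ℝ))) (Metric.ball_mem_nhds b (half_pos hb))
    (Eventually.of_forall fun c => (cont_Gi c).aestronglyMeasurable measurableSet_Ioi)
    (integrableGi hb)
    (Continuous.aestronglyMeasurable (by fun_prop))
    ?_ (exp_neg_integrableOn_Ioi 0 (half_pos hb)) ?_
  · have : (∫ x in Ioi (0:ℝ), exp (-(b*x))) = 1/b := integral_exp_neg_mul hb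
    rw [← this]
    exact hmain.2
  · filter_upwards [ae_restrict_mem measurableSet_Ioi] with x hx
    intro c hc
    rw [Real.norm_eq_abs, abs_of_pos (exp_pos _)]
    apply exp_le_exp.mpr
    have := hball c hc
    nlinarith [mem_Ioi.mp hx]
  · filter_upwards [ae_restrict_mem measurableSet_Ioi] with x hx
    intro c _
    have h1 : HasDerivAt (fun c : ℝ => -(c*x)) (-x) c := by
      simpa using (hasDerivAt_mul_const x).fun_neg
    have h2 := ((h1.exp).const_sub (exp (-x))).div_const x
    have hx0 := (mem_Ioi.mp hx).ne'
    simp only [Gi]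
    exact h2.congr_deriv (by field_simp)

lemma G_one : G 1 = 0 := by
  simp only [G]
  rw [setIntegral_congr_fun measurableSet_Ioi
    (show EqOn (Gi 1) (fun _ => (0:ℝ)) (Ioi 0) by intro x _; simp [Gi])]
  simp

lemma G_eq_log {a : ℝ} (ha : 1 ≤ a) : G a = log a := by
  have h : ∀ x ∈ uIcc (1:ℝ) a, HasDerivAt G (1/x) x := by
    intro x hx
    rw [uIcc_of_le ha] at hx
    exact G_hasDeriv (by linarith [hx.1])
  have hint : IntervalIntegrable (fun x : ℝ => 1/x) volume 1 a := by
    apply ContinuousOn.intervalIntegrable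
    apply ContinuousOn.div continuousOn_const continuousOn_id
    intro x hx
    rw [uIcc_of_le ha] at hx
    exact ne_of_gt (show (0:ℝ) < x by linarith [hx.1])
  have := intervalIntegral.integral_eq_sub_of_hasDerivAt h hint
  rw [integral_one_div (by rw [uIcc_of_le ha]; intro h0; linarith [h0.1]), G_one] at this
  simp at this
  linarith [this]

lemma Gamma_diff {x : ℝ} (hx : 0 < x) : DifferentiableAt ℝ Real.Gamma x := by
  apply Real.differentiableAt_Gamma
  intro m
  have : (0:ℝ) ≤ m := m.cast_nonneg
  intro h; rw [h] at hx; linarith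

lemma digamma_add_one {x : ℝ} (hx : 0 < x) : digamma (x+1) = digamma x + 1/x := by
  have hG := Real.Gamma_pos_of_pos hx
  have hd := Gamma_diff hx
  have hd1 := Gamma_diff (by linarith : (0:ℝ) < x + 1)
  -- derivative of y ↦ Gamma (y+1) at x
  have h1 : HasDerivAt (fun y : ℝ => Real.Gamma (y+1)) (deriv Real.Gamma (x+1)) x := by
    simpa [Function.comp_def] using (hd1.hasDerivAt.comp x ((hasDerivAt_id x).add_const 1))
  have h2 : HasDerivAt (fun y : ℝ => y * Real.Gamma y)
      (Real.Gamma x + x * deriv Real.Gamma x) x := by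
    have : HasDerivAt (fun y : ℝ => id y * Real.Gamma y) (1 * Real.Gamma x + id x * deriv Real.Gamma x) x := (hasDerivAt_id x).mul hd.hasDerivAt
    simpa using this
  have hev : (fun y : ℝ => Real.Gamma (y+1)) =ᶠ[𝓝 x] (fun y => y * Real.Gamma y) := by
    filter_upwards [eventually_gt_nhds hx] with y hy
    exact Real.Gamma_add_one hy.ne'
  have h3 : deriv Real.Gamma (x+1) = Real.Gamma x + x * deriv Real.Gamma x := by
    have := h1.congr_of_eventuallyEq hev.symm
    exact this.unique h2
  simp only [digamma, h3, Real.Gamma_add_one hx.ne']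
  field_simp
  ring

lemma digamma_deriv_log {x : ℝ} (hx : 0 < x) :
    deriv (Real.log ∘ Real.Gamma) x = digamma x := by
  rw [Function.comp_def, deriv.log (Gamma_diff hx) (Real.Gamma_pos_of_pos hx).ne']
  rfl

lemma digamma_mono {x y : ℝ} (hx : 0 < x) (hxy : x ≤ y) : digamma x ≤ digamma y := by
  rcases eq_or_lt_of_le hxy with rfl | h
  · rfl
  have hy : 0 < y := lt_trans hx h
  have hc := Real.convexOn_log_Gamma
  have hdx : DifferentiableAt ℝ (Real.log ∘ Real.Gamma) x := by
    exact ((Gamma_diff hx).log (Real.Gamma_pos_of_pos hx).ne')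
  have hdy : DifferentiableAt ℝ (Real.log ∘ Real.Gamma) y := by
    exact ((Gamma_diff hy).log (Real.Gamma_pos_of_pos hy).ne')
  have h1 := hc.deriv_le_slope (mem_Ioi.mpr hx) (mem_Ioi.mpr hy) h hdx
  have h2 := hc.slope_le_deriv (mem_Ioi.mpr hx) (mem_Ioi.mpr hy) h hdy
  rw [← digamma_deriv_log hx, ← digamma_deriv_log hy]
  linarith

lemma digamma_nat (n : ℕ) :
    digamma ((n:ℝ) + 1) = -Real.eulerMascheroniConstant + harmonic n := by
  have h1 := Real.deriv_Gamma_nat n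
  have h2 : Real.Gamma ((n:ℝ) + 1) = n.factorial := by
    exact_mod_cast Real.Gamma_nat_eq_factorial n
  have h3 : (n.factorial : ℝ) ≠ 0 := Nat.cast_ne_zero.mpr n.factorial_ne_zero
  simp only [digamma, h1, h2]
  field_simp

lemma F_sub_G {a : ℝ} (ha : 0 < a) : |F a - G a| ≤ 1/a := by
  have h1 := integrableFi ha
  have h2 := integrableGi ha
  have hFG : F a - G a = ∫ x in Ioi (0:ℝ), (Fi a x - Gi a x) := (integral_sub h1 h2).symm
  rw [hFG, ← Real.norm_eq_abs, ← integral_exp_neg_mul ha]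
  apply norm_integral_le_of_norm_le
  · simpa [neg_mul, IntegrableOn] using exp_neg_integrableOn_Ioi 0 ha
  · filter_upwards [ae_restrict_mem measurableSet_Ioi] with x hx
    have hx0 := mem_Ioi.mp hx
    have h0 := (one_sub_exp_pos hx0).ne'
    have heq : Fi a x - Gi a x = exp (-(a*x)) * (1/x - 1/(1 - exp (-x))) := by
      simp only [Fi, Gi]
      field_simp
      ring
    rw [heq, Real.norm_eq_abs, abs_mul, abs_of_pos (exp_pos _)]
    have habs : |1/x - 1/(1 - exp (-x))| ≤ 1 := by
      rw [abs_le]; constructor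
      · have := D_ub hx0; linarith
      · have := D_lb hx0; linarith
    nlinarith [exp_pos (-(a*x))]

lemma F_nat (n : ℕ) : F ((n:ℝ) + 1) = F 1 + harmonic n := by
  induction n with
  | zero => simp
  | succ n ih =>
    have h : ((n:ℝ) + 1) + 1 = ((n+1:ℕ):ℝ) + 1 := by push_cast; ring
    rw [← h, F_add_one (by positivity : (0:ℝ) < (n:ℝ)+1), ih, harmonic_succ]
    push_cast
    ring

lemma F_one : F 1 = -Real.eulerMascheroniConstant := by
  have hbound : ∀ n : ℕ, |F 1 + (harmonic n : ℝ) - log ((n:ℝ)+1)| ≤ 1/((n:ℝ)+1) := by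
    intro n
    have h1 : (0:ℝ) < (n:ℝ) + 1 := by positivity
    have h2 := F_sub_G h1
    rw [G_eq_log (by linarith : (1:ℝ) ≤ (n:ℝ)+1), F_nat n] at h2
    exact h2
  have ht1 : Tendsto (fun n : ℕ => F 1 + (harmonic n : ℝ) - log ((n:ℝ)+1)) atTop
      (𝓝 (F 1 + Real.eulerMascheroniConstant)) := by
    have := Real.tendsto_harmonic_sub_log_add_one
    have h2 := this.const_add (F 1)
    simpa [add_sub_assoc] using h2
  have ht2 : Tendsto (fun n : ℕ => F 1 + (harmonic n : ℝ) - log ((n:ℝ)+1)) atTop (𝓝 0) := by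
    apply squeeze_zero_norm hbound
    have : Tendsto (fun n : ℕ => ((n:ℝ)+1)) atTop atTop := by
      apply tendsto_atTop_add_const_right
      exact tendsto_natCast_atTop_atTop
    simpa [one_div, Pi.inv_def] using this.inv_tendsto_atTop
  have := tendsto_nhds_unique ht1 ht2
  linarith

lemma harmonic_diff_le (M : ℕ) : ∀ n : ℕ, ((harmonic (n+M) : ℝ)) - harmonic n ≤ M / ((n:ℝ)+1) := by
  induction M with
  | zero => intro n; simp
  | succ M ih =>
    intro n
    have h1 : n + (M+1) = (n + M) + 1 := by ring
    rw [h1, harmonic_succ]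
    have h2 := ih n
    have h3 : ((n:ℝ) + M + 1)⁻¹ ≤ 1/((n:ℝ)+1) := by
      rw [one_div]
      apply inv_anti₀ (by positivity)
      push_cast; linarith [Nat.cast_nonneg (α := ℝ) M]
    push_cast at *
    have h4 : ((M:ℝ)+1)/((n:ℝ)+1) = (M:ℝ)/((n:ℝ)+1) + 1/((n:ℝ)+1) := by ring
    rw [h4]
    linarith
  
lemma harmonic_mono_cast {m n : ℕ} (h : m ≤ n) : (harmonic m : ℝ) ≤ harmonic n := by
  induction n with
  | zero => interval_cases m; rfl
  | succ n ih =>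
    rcases Nat.lt_or_ge m (n+1) with hlt | hge
    · have h5 : (harmonic (n+1) : ℝ) = (harmonic n : ℝ) + ((n:ℝ)+1)⁻¹ := by
        rw [harmonic_succ]; push_cast; ring
      have h6 : (0:ℝ) ≤ ((n:ℝ)+1)⁻¹ := by positivity
      have := ih (Nat.lt_succ_iff.mp hlt)
      linarith
    · rw [le_antisymm h hge]


lemma shift {a : ℝ} (ha : 0 < a) : ∀ n : ℕ, digamma (a + n) - F (a + n) = digamma a - F a := by
  intro n
  induction n with
  | zero => simp
  | succ n ih =>
    have hpos : 0 < a + n := by positivity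
    have h1 : a + ((n+1:ℕ):ℝ) = (a + n) + 1 := by push_cast; ring
    rw [h1, digamma_add_one hpos, F_add_one hpos]
    linarith

theorem main (a : ℝ) (ha : 0 < a) : digamma a = F a := by
  set M := ⌈a⌉₊ with hM
  have haM : a ≤ M := Nat.le_ceil a
  set γ := Real.eulerMascheroniConstant
  have key : ∀ n : ℕ, |digamma a - F a| ≤ (M:ℝ)/((n:ℝ)+1) := by
    intro n
    have h1 : (0:ℝ) < (n:ℝ)+1 := by positivity
    set t : ℝ := a + ((n+1:ℕ):ℝ) with ht
    have htc : t = a + ((n:ℝ)+1) := by rw [ht]; push_cast; ring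
    have hlow : ((n:ℝ)+1) ≤ t := by rw [htc]; linarith
    have hup : t ≤ ((n+M:ℕ):ℝ) + 1 := by rw [htc]; push_cast; linarith
    have hdl : digamma ((n:ℝ)+1) ≤ digamma t := digamma_mono h1 hlow
    have hdu : digamma t ≤ digamma (((n+M:ℕ):ℝ)+1) := digamma_mono (by linarith) hup
    have hfl : F ((n:ℝ)+1) ≤ F t := F_mono h1 hlow
    have hfu : F t ≤ F (((n+M:ℕ):ℝ)+1) := F_mono (by linarith) hup
    have hd1 := digamma_nat n
    have hd2 := digamma_nat (n+M)
    have hf1 : F ((n:ℝ)+1) = -γ + harmonic n := by rw [F_nat, F_one]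
    have hf2 : F (((n+M:ℕ):ℝ)+1) = -γ + harmonic (n+M) := by rw [F_nat, F_one]
    have hshift := shift ha (n+1)
    rw [← ht] at hshift
    have hharm := harmonic_diff_le M n
    have hharm2 : (harmonic n : ℝ) ≤ harmonic (n+M) := harmonic_mono_cast (Nat.le_add_right n M)
    rw [abs_le]
    constructor
    · rw [← hshift]; linarith
    · rw [← hshift]; linarith
  have htend : Tendsto (fun n : ℕ => (M:ℝ)/((n:ℝ)+1)) atTop (𝓝 0) := by
    have h1 : Tendsto (fun n : ℕ => ((n:ℝ)+1)) atTop atTop :=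
      tendsto_atTop_add_const_right _ _ tendsto_natCast_atTop_atTop
    have h2 := h1.inv_tendsto_atTop
    have h3 := h2.const_mul (M:ℝ)
    simpa [div_eq_mul_inv] using h3
  have habs : |digamma a - F a| ≤ 0 := ge_of_tendsto' htend key
  have h0 : digamma a - F a = 0 := abs_eq_zero.mp (le_antisymm habs (abs_nonneg _))
  linarith



end DigammaAux

theorem digamma_eq_integral (a : ℝ) (ha : 0 < a) :
    digamma a
      = ∫ x in Set.Ioi (0 : ℝ),
          (Real.exp (-x) / x - Real.exp (-(a * x)) / (1 - Real.exp (-x))) := by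
  have := DigammaAux.main a ha
  simpa [DigammaAux.F, DigammaAux.Fi] using this
end

section
/- For every real number a > 0, ∫_0^1 (1/ln t + t^{a-1}/(1-t)) dt = -ψ(a). -/
open MeasureTheory Real intervalIntegral

namespace GaussDigammaAux

open Set Filter Topology

lemma neg_log_pos {t : ℝ} (h0 : 0 < t) (h1 : t < 1) : 0 < -Real.log t := by
  simpa using Real.log_neg h0 h1

lemma one_sub_le_neg_log {t : ℝ} (h0 : 0 < t) : 1 - t ≤ -Real.log t := by
  have := Real.log_le_sub_one_of_pos h0
  linarith

noncomputable def h (t : ℝ) : ℝ := 1 / Real.log t + 1 / (1 - t)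

lemma h_nonneg {t : ℝ} (h0 : 0 < t) (h1 : t < 1) : 0 ≤ h t := by
  have hl := neg_log_pos h0 h1
  have h1t : 0 < 1 - t := by linarith
  have : 1 / (-Real.log t) ≤ 1 / (1 - t) :=
    one_div_le_one_div_of_le h1t (one_sub_le_neg_log h0)
  have : -(1 / Real.log t) ≤ 1 / (1 - t) := by
    rwa [one_div_neg_eq_neg_one_div] at this
  unfold h; linarith

lemma h_le_one {t : ℝ} (h0 : 0 < t) (h1 : t < 1) : h t ≤ 1 := by
  have hl := neg_log_pos h0 h1
  have h1t : 0 < 1 - t := by linarith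
  -- t * (-log t) ≤ 1 - t
  have key : t * (-Real.log t) ≤ 1 - t := by
    have h1' := Real.log_le_sub_one_of_pos (x := 1/t) (by positivity)
    rw [Real.log_div one_ne_zero h0.ne', Real.log_one] at h1'
    have : t * (0 - Real.log t) ≤ t * (1/t - 1) := by
      apply mul_le_mul_of_nonneg_left h1' h0.le
    calc t * (-Real.log t) = t * (0 - Real.log t) := by ring
    _ ≤ t * (1/t - 1) := this
    _ = 1 - t := by field_simp
  -- 1/(1-t) - 1 = t/(1-t) ≤ 1/(-log t)
  have key2 : t / (1 - t) ≤ 1 / (-Real.log t) := by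
    rw [div_le_div_iff₀ h1t hl]
    linarith
  have : 1 / (1 - t) - 1 = t / (1 - t) := by field_simp; ring
  have h3 : 1 / Real.log t = -(1 / (-Real.log t)) := by
    rw [one_div_neg_eq_neg_one_div, neg_neg]
  unfold h
  rw [h3]
  linarith

/-- On [1/2,1), |t^c - 1| ≤ K (1-t). -/
lemma abs_rpow_sub_one_le {c t : ℝ} (hhalf : 1/2 ≤ t) (h1 : t < 1) :
    |t ^ c - 1| ≤ (max |c| 1 * 2 ^ |c|) * (1 - t) := by
  have h0 : 0 < t := lt_of_lt_of_le (by norm_num) hhalf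
  have hbase : ∀ d : ℝ, 0 ≤ d → 1 - t ^ d ≤ max d 1 * (1 - t) := by
    intro d hd
    rcases le_or_gt d 1 with hd1 | hd1
    · have : t ≤ t ^ d := by
        calc t = t ^ (1:ℝ) := (Real.rpow_one t).symm
        _ ≤ t ^ d := Real.rpow_le_rpow_of_exponent_ge h0 h1.le hd1
      nlinarith [le_max_right d 1]
    · have hber : 1 + d * (t - 1) ≤ t ^ d := by
        have := one_add_mul_self_le_rpow_one_add (s := t - 1) (by linarith) hd1.le
        simpa using this
      nlinarith [le_max_left d 1]
  rcases le_or_gt 0 c with hc | hc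
  · have ht1 : t ^ c ≤ 1 := Real.rpow_le_one h0.le h1.le hc
    rw [abs_of_nonpos (by linarith), neg_sub]
    have h2c : (1:ℝ) ≤ 2 ^ |c| := Real.one_le_rpow one_le_two (abs_nonneg c)
    have := hbase c hc
    have hmax : max c 1 = max |c| 1 := by rw [abs_of_nonneg hc]
    rw [hmax] at this
    nlinarith [sub_nonneg.mpr h1.le, le_max_right |c| 1, abs_nonneg c,
      mul_le_mul_of_nonneg_right h2c (mul_nonneg (le_trans zero_le_one (le_max_right |c| 1)) (by linarith : (0:ℝ) ≤ 1 - t))]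
  · have hpos : 1 ≤ t ^ c := Real.one_le_rpow_of_pos_of_le_one_of_nonpos h0 h1.le hc.le
    have htc : t ^ c ≤ 2 ^ |c| := by
      have h1t : t⁻¹ ≤ 2 := by
        rw [inv_le_comm₀ h0 (by norm_num)]; linarith
      have : t ^ c = (t⁻¹) ^ (-c) := by
        rw [← Real.rpow_neg_one t, ← Real.rpow_mul h0.le]
        norm_num
      rw [this, abs_of_neg hc]
      exact Real.rpow_le_rpow (by positivity) h1t (by linarith)
    have key : t ^ c - 1 = t ^ c * (1 - t ^ (-c)) := by
      rw [mul_sub, mul_one, ← Real.rpow_add h0]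
      simp
    have hb := hbase (-c) (by linarith)
    have hmax : max (-c) 1 = max |c| 1 := by rw [abs_of_neg hc]
    rw [hmax] at hb
    rw [abs_of_nonneg (by linarith), key]
    have h1' : 0 ≤ 1 - t ^ (-c) := by
      have : t ^ (-c) ≤ 1 := Real.rpow_le_one h0.le h1.le (by linarith)
      linarith
    calc t ^ c * (1 - t ^ (-c)) ≤ 2 ^ |c| * (max |c| 1 * (1 - t)) := by
          apply mul_le_mul htc hb h1' (by positivity)
    _ = max |c| 1 * 2 ^ |c| * (1 - t) := by ring

/-- Uniform domination for the difference quotient. -/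
lemma abs_div_one_sub_le {c t : ℝ} (h0 : 0 < t) (h1 : t < 1) :
    |(t ^ c - 1) / (1 - t)| ≤ (2 + max |c| 1 * 2 ^ |c|) + 2 * t ^ c := by
  have h1t : 0 < 1 - t := by linarith
  have htc : 0 ≤ t ^ c := Real.rpow_nonneg h0.le c
  rcases lt_or_ge t (1/2) with hhalf | hhalf
  · have h2 : (1:ℝ)/2 ≤ 1 - t := by linarith
    have : |(t ^ c - 1) / (1 - t)| = |t ^ c - 1| / (1 - t) := by
      rw [abs_div, abs_of_pos h1t]
    rw [this]
    have hnum : |t ^ c - 1| ≤ t ^ c + 1 := by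
      have := abs_sub_abs_le_abs_sub (t ^ c) 1
      rw [abs_sub_comm]
      calc |1 - t ^ c| ≤ |1| + |t ^ c| := abs_sub _ _
      _ = t ^ c + 1 := by rw [abs_of_nonneg htc]; simp [add_comm]
    calc |t ^ c - 1| / (1 - t) ≤ (t ^ c + 1) / (1/2) :=
          div_le_div₀ (by positivity) hnum (by norm_num) h2
    _ = 2 * t ^ c + 2 := by ring
    _ ≤ (2 + max |c| 1 * 2 ^ |c|) + 2 * t ^ c := by
          have : (0:ℝ) ≤ max |c| 1 * 2 ^ |c| := by positivity
          linarith
  · have := abs_rpow_sub_one_le (c := c) hhalf h1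
    have : |(t ^ c - 1) / (1 - t)| ≤ max |c| 1 * 2 ^ |c| := by
      rw [abs_div, abs_of_pos h1t, div_le_iff₀ h1t]
      calc |t ^ c - 1| ≤ max |c| 1 * 2 ^ |c| * (1 - t) := abs_rpow_sub_one_le hhalf h1
      _ = max |c| 1 * 2 ^ |c| * (1 - t) := rfl
    nlinarith [abs_nonneg ((t ^ c - 1) / (1 - t))]

/-- Same bound with log in the denominator. -/
lemma abs_div_log_le {c t : ℝ} (h0 : 0 < t) (h1 : t < 1) :
    |(t ^ c - 1) / Real.log t| ≤ (2 + max |c| 1 * 2 ^ |c|) + 2 * t ^ c := by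
  have hl : 0 < -Real.log t := by simpa using Real.log_neg h0 h1
  have h1t : 0 < 1 - t := by linarith
  have hle : 1 - t ≤ -Real.log t := by
    have := Real.log_le_sub_one_of_pos h0; linarith
  have : |(t ^ c - 1) / Real.log t| ≤ |(t ^ c - 1) / (1 - t)| := by
    rw [abs_div, abs_div, abs_of_pos h1t]
    have : |Real.log t| = -Real.log t := abs_of_neg (by linarith)
    rw [this]
    exact div_le_div_of_nonneg_left (abs_nonneg _) h1t hle
  exact this.trans (abs_div_one_sub_le h0 h1)

lemma ae_ne (x : ℝ) : ∀ᵐ t : ℝ, t ≠ x := by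
  rw [ae_iff]
  simpa [not_not, Set.setOf_eq_eq_singleton] using Real.volume_singleton

lemma ae_Ioo_uIoc : ∀ᵐ t ∂(volume.restrict (Set.uIoc (0:ℝ) 1)), t ∈ Ioo (0:ℝ) 1 := by
  filter_upwards [ae_restrict_mem measurableSet_uIoc, ae_restrict_of_ae (ae_ne 1)] with t ht h1
  rw [Set.uIoc_of_le (by norm_num : (0:ℝ) ≤ 1)] at ht
  exact ⟨ht.1, lt_of_le_of_ne ht.2 h1⟩

lemma ae_Ioo_Icc : ∀ᵐ t ∂(volume.restrict (Icc (0:ℝ) 1)), t ∈ Ioo (0:ℝ) 1 := by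
  filter_upwards [ae_restrict_mem measurableSet_Icc, ae_restrict_of_ae (ae_ne 0),
    ae_restrict_of_ae (ae_ne 1)] with t ht h0 h1
  exact ⟨lt_of_le_of_ne ht.1 (Ne.symm h0), lt_of_le_of_ne ht.2 h1⟩

lemma integrable_of_bound {f : ℝ → ℝ} (hm : AEStronglyMeasurable f (volume.restrict (Set.uIoc (0:ℝ) 1)))
    {c C : ℝ} (hc : -1 < c) (hb : ∀ t ∈ Ioo (0:ℝ) 1, |f t| ≤ C + 2 * t ^ c) :
    IntervalIntegrable f volume 0 1 := by
  refine IntervalIntegrable.mono_fun' (g := fun t => C + 2 * t ^ c)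
    (intervalIntegrable_const.add ((intervalIntegrable_rpow' hc).const_mul 2)) hm ?_
  filter_upwards [ae_Ioo_uIoc] with t ht
  simpa [Real.norm_eq_abs] using hb t ht

lemma meas_g (a : ℝ) : Measurable (fun t : ℝ => 1 / Real.log t + t ^ (a-1) / (1 - t)) := by
  have h1 : Measurable fun t : ℝ => t ^ (a-1) := by measurability
  have h2 : Measurable fun t : ℝ => 1 / Real.log t := by measurability
  exact h2.add (h1.div (measurable_const.sub measurable_id))

noncomputable def g (a t : ℝ) : ℝ := 1 / Real.log t + t ^ (a - 1) / (1 - t)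
noncomputable def F (a : ℝ) : ℝ := ∫ t in (0:ℝ)..1, g a t

lemma g_eq_h_add {a t : ℝ} (h0 : 0 < t) (h1 : t < 1) :
    g a t = h t + (t ^ (a - 1) - 1) / (1 - t) := by
  unfold g h
  have h1t : (1:ℝ) - t ≠ 0 := by intro hh; nlinarith
  field_simp
  ring

lemma abs_g_le {a t : ℝ} (h0 : 0 < t) (h1 : t < 1) :
    |g a t| ≤ (3 + max |a-1| 1 * 2 ^ |a-1|) + 2 * t ^ (a-1) := by
  rw [g_eq_h_add h0 h1]
  have hh : |h t| ≤ 1 := abs_le.mpr ⟨by linarith [h_nonneg h0 h1], h_le_one h0 h1⟩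
  have := abs_div_one_sub_le (c := a-1) h0 h1
  calc |h t + (t ^ (a - 1) - 1) / (1 - t)| ≤ |h t| + |(t ^ (a - 1) - 1) / (1 - t)| := abs_add_le _ _
  _ ≤ 1 + ((2 + max |a-1| 1 * 2 ^ |a-1|) + 2 * t ^ (a-1)) := add_le_add hh this
  _ = (3 + max |a-1| 1 * 2 ^ |a-1|) + 2 * t ^ (a-1) := by ring

lemma intg {a : ℝ} (ha : 0 < a) : IntervalIntegrable (g a) volume 0 1 :=
  integrable_of_bound (meas_g a).aestronglyMeasurable (by linarith : (-1:ℝ) < a - 1)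
    (fun t ht => abs_g_le ht.1 ht.2)

lemma integral_rpow_one_div {c : ℝ} (hc : -1 < c) : ∫ t in (0:ℝ)..1, t ^ c = 1/(c+1) := by
  rw [integral_rpow (Or.inl hc), Real.one_rpow, Real.zero_rpow (by linarith : c+1 ≠ 0)]
  ring

lemma F_succ {a : ℝ} (ha : 0 < a) : F (a+1) = F a - 1/a := by
  have key : ∫ t in (0:ℝ)..1, (g a t - g (a+1) t) = ∫ t in (0:ℝ)..1, t ^ (a-1) := by
    apply intervalIntegral.integral_congr_ae
    filter_upwards [ae_ne 1] with t hne ht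
    rw [Set.uIoc_of_le (by norm_num : (0:ℝ) ≤ 1)] at ht
    have h0 : 0 < t := ht.1
    have h1 : t < 1 := lt_of_le_of_ne ht.2 hne
    unfold g
    have h1t : (1:ℝ) - t ≠ 0 := by intro hh; nlinarith
    have hstep : t ^ (a+1-1) = t ^ (a-1) * t := by
      rw [show a+1-1 = (a-1)+1 by ring, Real.rpow_add_one (ne_of_gt h0)]
    rw [hstep]
    field_simp
    ring
  rw [integral_sub (intg ha) (intg (by linarith))] at key
  rw [integral_rpow_one_div (by linarith)] at key
  have : a - 1 + 1 = a := by ring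
  rw [this] at key
  unfold F
  linarith

lemma F_anti {a b : ℝ} (ha : 0 < a) (hab : a ≤ b) : F b ≤ F a := by
  apply integral_mono_ae_restrict (by norm_num) (intg (lt_of_lt_of_le ha hab)) (intg ha)
  filter_upwards [ae_Ioo_Icc] with t ht
  obtain ⟨h0, h1⟩ := ht
  unfold g
  have hle : t ^ (b-1) ≤ t ^ (a-1) := Real.rpow_le_rpow_of_exponent_ge h0 h1.le (by linarith)
  have h1t : 0 < 1 - t := by linarith

  gcongr

lemma F_one : F 1 = ∫ t in (0:ℝ)..1, h t := by
  unfold F g h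
  norm_num

noncomputable def psi (x : ℝ) : ℝ := deriv (Real.log ∘ Real.Gamma) x

lemma diffGamma {x : ℝ} (hx : 0 < x) : DifferentiableAt ℝ Real.Gamma x :=
  Real.differentiableAt_Gamma (fun m => by
    have : (0:ℝ) ≤ m := Nat.cast_nonneg m
    intro hh; rw [hh] at hx; linarith)

lemma diff_f {x : ℝ} (hx : 0 < x) : DifferentiableAt ℝ (Real.log ∘ Real.Gamma) x :=
  (diffGamma hx).log (Real.Gamma_pos_of_pos hx).ne'

lemma digamma_eq {x : ℝ} (hx : 0 < x) : digamma x = psi x := by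
  unfold digamma psi
  rw [Function.comp_def, deriv.log (diffGamma hx) (Real.Gamma_pos_of_pos hx).ne']

lemma psi_rec {x : ℝ} (hx : 0 < x) : psi (x+1) = psi x + 1/x := by
  unfold psi
  rw [← deriv_comp_add_const, one_div, ← Real.deriv_log x,
    ← deriv_add (diff_f hx) (Real.differentiableAt_log hx.ne')]
  apply Filter.EventuallyEq.deriv_eq
  filter_upwards [eventually_gt_nhds hx] with y hy
  simp only [Function.comp_apply, Real.Gamma_add_one hy.ne',
    Real.log_mul hy.ne' (Real.Gamma_pos_of_pos hy).ne', add_comm]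
  rfl

lemma psi_mono {x y : ℝ} (hx : 0 < x) (hxy : x ≤ y) : psi x ≤ psi y :=
  Real.convexOn_log_Gamma.monotoneOn_deriv (fun z hz => diff_f hz) hx
    (lt_of_lt_of_le hx hxy) hxy

lemma psi_nat (n : ℕ) : psi ((n:ℝ)+1) = -Real.eulerMascheroniConstant + (harmonic n : ℝ) := by
  rw [← digamma_eq (by positivity : (0:ℝ) < (n:ℝ)+1)]
  unfold digamma
  rw [Real.deriv_Gamma_nat n, Real.Gamma_nat_eq_factorial]
  rw [mul_comm, mul_div_assoc, div_self (by exact_mod_cast (Nat.factorial_ne_zero n)), mul_one]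

lemma ae_Ioo_Ioc : ∀ᵐ t ∂(volume.restrict (Ioc (0:ℝ) 1)), t ∈ Ioo (0:ℝ) 1 := by
  filter_upwards [ae_restrict_mem measurableSet_Ioc, ae_restrict_of_ae (ae_ne 1)] with t ht h1
  exact ⟨ht.1, lt_of_le_of_ne ht.2 h1⟩

noncomputable def phi (x : ℝ) : ℝ := ∫ t in (0:ℝ)..1, (t ^ (x-1) - 1) / Real.log t

lemma meas_q (x : ℝ) : Measurable (fun t : ℝ => (t ^ (x-1) - 1) / Real.log t) := by
  have h1 : Measurable fun t : ℝ => t ^ (x-1) := by measurability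
  exact (h1.sub measurable_const).div Real.measurable_log

lemma intq {x : ℝ} (hx : 0 < x) :
    IntervalIntegrable (fun t : ℝ => (t ^ (x-1) - 1) / Real.log t) volume 0 1 :=
  integrable_of_bound (meas_q x).aestronglyMeasurable (by linarith : (-1:ℝ) < x - 1)
    (fun t ht => abs_div_log_le ht.1 ht.2)

lemma hasDerivAt_phi {b : ℝ} (hb : 0 < b) : HasDerivAt phi (1/b) b := by
  have key := intervalIntegral.hasDerivAt_integral_of_dominated_loc_of_deriv_le
    (μ := volume) (a := (0:ℝ)) (b := (1:ℝ))
    (F := fun x t => (t ^ (x-1) - 1) / Real.log t)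
    (F' := fun x t => t ^ (x-1))
    (x₀ := b) (s := Metric.ball b (b/2))
    (bound := fun t => t ^ (b/2-1)) (Metric.ball_mem_nhds b (by positivity))
    (Eventually.of_forall fun x => (meas_q x).aestronglyMeasurable)
    (intq hb) ?hF'meas ?hbound ?boundint ?hdiff
  · have h2 := key.2
    rwa [show ∫ t in (0:ℝ)..1, t ^ (b-1) = 1/b from ?_] at h2
    rw [integral_rpow_one_div (by linarith)]
    norm_num
  case hF'meas =>
    have h1 : Measurable fun t : ℝ => t ^ (b-1) := by measurability
    exact h1.aestronglyMeasurable
  case hbound =>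
    filter_upwards [ae_ne 1] with t hne ht x hx
    rw [Set.uIoc_of_le zero_le_one] at ht
    have h0 : 0 < t := ht.1
    have h1 : t < 1 := lt_of_le_of_ne ht.2 hne
    rw [Real.norm_eq_abs, abs_of_nonneg (Real.rpow_nonneg h0.le _)]
    apply Real.rpow_le_rpow_of_exponent_ge h0 h1.le
    have hd := Metric.mem_ball.mp hx
    rw [Real.dist_eq] at hd
    have hd2 := abs_lt.mp hd
    linarith [hd2.1]
  case boundint =>
    exact intervalIntegrable_rpow' (by linarith)
  case hdiff =>
    filter_upwards [ae_ne 1] with t hne ht x _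
    rw [Set.uIoc_of_le zero_le_one] at ht
    have h0 : 0 < t := ht.1
    have h1 : t < 1 := lt_of_le_of_ne ht.2 hne
    have hlog : Real.log t ≠ 0 := ne_of_lt (Real.log_neg h0 h1)
    have hrw : HasDerivAt (fun y : ℝ => t ^ (y-1)) (t ^ (x-1) * Real.log t) x := by
      have base := (Real.hasStrictDerivAt_const_rpow h0 (x-1)).hasDerivAt
      have comp := base.comp x ((hasDerivAt_id x).sub_const 1)
      simpa [Function.comp_def] using comp
    have hfin := (hrw.sub_const 1).div_const (Real.log t)
    convert hfin using 1
    · rfl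
    field_simp

lemma phi_one : phi 1 = 0 := by
  unfold phi
  norm_num

lemma phi_eq_log {b : ℝ} (hb : 1 ≤ b) : phi b = Real.log b := by
  have h0b : 0 < b := by linarith
  have hftc := intervalIntegral.integral_eq_sub_of_hasDerivAt (f := phi)
    (f' := fun s => 1/s) (a := 1) (b := b) ?hder ?hint
  · rw [integral_one_div (by intro hc; rw [Set.uIcc_of_le hb] at hc; exact absurd hc.1 (by norm_num)),
      div_one] at hftc
    rw [phi_one, sub_zero] at hftc
    linarith [hftc]
  case hder =>
    intro x hx
    rw [Set.uIcc_of_le hb] at hx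
    exact hasDerivAt_phi (by linarith [hx.1])
  case hint =>
    apply ContinuousOn.intervalIntegrable
    apply ContinuousOn.div continuousOn_const continuousOn_id
    intro x hx
    rw [Set.uIcc_of_le hb] at hx
    have h1x : (1:ℝ) ≤ x := hx.1
    simp only [id]
    intro hc; rw [hc] at h1x; norm_num at h1x

lemma meas_h : Measurable h := by
  unfold h
  exact (measurable_const.div Real.measurable_log).add
    (measurable_const.div (measurable_const.sub measurable_id))

lemma harmonic_integral (n : ℕ) :
    ∫ t in (0:ℝ)..1, (1 - t ^ (n:ℝ)) / (1 - t) = (harmonic n : ℝ) := by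
  have hstep : ∫ t in (0:ℝ)..1, (1 - t ^ (n:ℝ)) / (1 - t)
      = ∫ t in (0:ℝ)..1, (∑ k ∈ Finset.range n, t ^ k) := by
    apply intervalIntegral.integral_congr_ae
    filter_upwards [ae_ne 1] with t hne ht
    rw [Set.uIoc_of_le zero_le_one] at ht
    have h0 : 0 < t := ht.1
    rw [Real.rpow_natCast, geom_sum_eq hne n]
    rw [show (1:ℝ) - t ^ n = -(t ^ n - 1) by ring, show (1:ℝ) - t = -(t - 1) by ring,
      neg_div_neg_eq]
  rw [hstep, intervalIntegral.integral_finset_sum]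
  · have : ∀ k ∈ Finset.range n, ∫ t in (0:ℝ)..1, t ^ k = 1/((k:ℝ)+1) := by
      intro k _
      rw [integral_pow]
      norm_num
    rw [Finset.sum_congr rfl this]
    rw [harmonic]
    push_cast
    simp [one_div]
  · intro k _
    exact (continuous_pow k).intervalIntegrable 0 1

lemma log_integral (n : ℕ) :
    ∫ t in (0:ℝ)..1, (1 - t ^ (n:ℝ)) / Real.log t = -Real.log ((n:ℝ)+1) := by
  have hphi := phi_eq_log (b := (n:ℝ)+1) (by simp [Nat.cast_nonneg])
  unfold phi at hphi
  rw [show (n:ℝ)+1-1 = (n:ℝ) by ring] at hphi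
  have : ∀ t : ℝ, (1 - t ^ (n:ℝ)) / Real.log t = -((t ^ (n:ℝ) - 1) / Real.log t) := by
    intro t; rw [← neg_div, neg_sub]
  simp_rw [this]
  rw [intervalIntegral.integral_neg, hphi]

lemma int_h : IntervalIntegrable h volume 0 1 := by
  apply integrable_of_bound meas_h.aestronglyMeasurable (by norm_num : (-1:ℝ) < 0)
    (C := -1)
  intro t ht
  rw [Real.rpow_zero]
  have := h_nonneg ht.1 ht.2
  have := h_le_one ht.1 ht.2
  rw [abs_le]; constructor <;> linarith

lemma int_pow_h (n : ℕ) : IntervalIntegrable (fun t => t ^ (n:ℝ) * h t) volume 0 1 := by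
  have hm : Measurable fun t : ℝ => t ^ (n:ℝ) := by measurability
  apply integrable_of_bound (hm.mul meas_h).aestronglyMeasurable (by norm_num : (-1:ℝ) < 0)
    (C := -1)
  intro t ht
  rw [Real.rpow_zero]
  have h1 := h_nonneg ht.1 ht.2
  have h2 := h_le_one ht.1 ht.2
  have h3 : 0 ≤ t ^ (n:ℝ) := Real.rpow_nonneg ht.1.le _
  have h4 : t ^ (n:ℝ) ≤ 1 := Real.rpow_le_one ht.1.le ht.2.le (Nat.cast_nonneg n)
  simp only [Pi.mul_apply, Pi.sub_apply, Pi.div_apply, id_eq]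
  rw [abs_of_nonneg (mul_nonneg h3 h1)]
  nlinarith

lemma int_omp_h (n : ℕ) : IntervalIntegrable (fun t => (1 - t ^ (n:ℝ)) * h t) volume 0 1 := by
  have hm : Measurable fun t : ℝ => t ^ (n:ℝ) := by measurability
  apply integrable_of_bound (((measurable_const.sub hm)).mul meas_h).aestronglyMeasurable
    (by norm_num : (-1:ℝ) < 0) (C := -1)
  intro t ht
  rw [Real.rpow_zero]
  have h1 := h_nonneg ht.1 ht.2
  have h2 := h_le_one ht.1 ht.2
  have h3 : 0 ≤ t ^ (n:ℝ) := Real.rpow_nonneg ht.1.le _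
  have h4 : t ^ (n:ℝ) ≤ 1 := Real.rpow_le_one ht.1.le ht.2.le (Nat.cast_nonneg n)
  simp only [Pi.mul_apply, Pi.sub_apply, Pi.div_apply, id_eq]
  rw [abs_of_nonneg (mul_nonneg (by linarith) h1)]
  nlinarith

lemma int_div_log (n : ℕ) :
    IntervalIntegrable (fun t : ℝ => (1 - t ^ (n:ℝ)) / Real.log t) volume 0 1 := by
  have hm : Measurable fun t : ℝ => t ^ (n:ℝ) := by measurability
  apply integrable_of_bound (((measurable_const.sub hm)).div Real.measurable_log).aestronglyMeasurable
    (show (-1:ℝ) < (n:ℝ) by exact lt_of_lt_of_le neg_one_lt_zero (Nat.cast_nonneg n)) (C := 2 + max |(n:ℝ)| 1 * 2 ^ |(n:ℝ)|)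
  intro t ht
  have := abs_div_log_le (c := (n:ℝ)) ht.1 ht.2
  simp only [Pi.mul_apply, Pi.sub_apply, Pi.div_apply, id_eq]
  rw [show (1:ℝ) - t ^ (n:ℝ) = -(t ^ (n:ℝ) - 1) by ring, neg_div, abs_neg]
  exact this
  done

lemma int_div_one_sub (n : ℕ) :
    IntervalIntegrable (fun t : ℝ => (1 - t ^ (n:ℝ)) / (1 - t)) volume 0 1 := by
  have hm : Measurable fun t : ℝ => t ^ (n:ℝ) := by measurability
  apply integrable_of_bound
    (((measurable_const.sub hm)).div (measurable_const.sub measurable_id)).aestronglyMeasurable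
    (show (-1:ℝ) < (n:ℝ) by exact lt_of_lt_of_le neg_one_lt_zero (Nat.cast_nonneg n)) (C := 2 + max |(n:ℝ)| 1 * 2 ^ |(n:ℝ)|)
  intro t ht
  have := abs_div_one_sub_le (c := (n:ℝ)) ht.1 ht.2
  simp only [Pi.mul_apply, Pi.sub_apply, Pi.div_apply, id_eq]
  rw [show (1:ℝ) - t ^ (n:ℝ) = -(t ^ (n:ℝ) - 1) by ring, neg_div, abs_neg]
  exact this

lemma omp_h_integral (n : ℕ) :
    ∫ t in (0:ℝ)..1, (1 - t ^ (n:ℝ)) * h t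
      = (harmonic n : ℝ) - Real.log ((n:ℝ)+1) := by
  have hsplit : ∀ t : ℝ, (1 - t ^ (n:ℝ)) * h t
      = (1 - t ^ (n:ℝ)) / Real.log t + (1 - t ^ (n:ℝ)) / (1 - t) := by
    intro t
    unfold h
    rw [mul_add, mul_one_div, mul_one_div]
  simp_rw [hsplit]
  rw [intervalIntegral.integral_add (int_div_log n) (int_div_one_sub n),
    log_integral n, harmonic_integral n]
  ring

lemma pow_h_integral (n : ℕ) :
    ∫ t in (0:ℝ)..1, t ^ (n:ℝ) * h t
      = F 1 - ((harmonic n : ℝ) - Real.log ((n:ℝ)+1)) := by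
  have hsplit : ∀ t : ℝ, t ^ (n:ℝ) * h t = h t - (1 - t ^ (n:ℝ)) * h t := by
    intro t; ring
  simp_rw [hsplit]
  rw [intervalIntegral.integral_sub int_h (int_omp_h n), omp_h_integral n, F_one]

lemma pow_h_bounds (n : ℕ) :
    |∫ t in (0:ℝ)..1, t ^ (n:ℝ) * h t| ≤ 1/((n:ℝ)+1) := by
  have hlow : 0 ≤ ∫ t in (0:ℝ)..1, t ^ (n:ℝ) * h t := by
    apply intervalIntegral.integral_nonneg_of_ae_restrict zero_le_one
    filter_upwards [ae_Ioo_Icc] with t ht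
    exact mul_nonneg (Real.rpow_nonneg ht.1.le _) (h_nonneg ht.1 ht.2)
  have hup : (∫ t in (0:ℝ)..1, t ^ (n:ℝ) * h t) ≤ 1/((n:ℝ)+1) := by
    have := intervalIntegral.integral_mono_ae_restrict zero_le_one (int_pow_h n)
      (intervalIntegrable_rpow' (show (-1:ℝ) < (n:ℝ) by exact lt_of_lt_of_le neg_one_lt_zero (Nat.cast_nonneg n))) ?_
    · calc (∫ t in (0:ℝ)..1, t ^ (n:ℝ) * h t) ≤ ∫ t in (0:ℝ)..1, t ^ (n:ℝ) := this
      _ = 1/((n:ℝ)+1) := integral_rpow_one_div (lt_of_lt_of_le neg_one_lt_zero (Nat.cast_nonneg n))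
    · filter_upwards [ae_Ioo_Icc] with t ht
      have h3 : 0 ≤ t ^ (n:ℝ) := Real.rpow_nonneg ht.1.le _
      have h2 := h_le_one ht.1 ht.2
      calc t ^ (n:ℝ) * h t ≤ t ^ (n:ℝ) * 1 := by nlinarith
      _ = t ^ (n:ℝ) := mul_one _
  rw [abs_of_nonneg hlow]; exact hup

lemma F_one_eq_gamma : F 1 = Real.eulerMascheroniConstant := by
  have key : ∀ n : ℕ, |F 1 - ((harmonic n : ℝ) - Real.log ((n:ℝ)+1))| ≤ 1/((n:ℝ)+1) := by
    intro n
    rw [← pow_h_integral n]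
    exact pow_h_bounds n
  have h0 : Tendsto (fun n : ℕ => F 1 - ((harmonic n : ℝ) - Real.log ((n:ℝ)+1))) atTop (𝓝 0) :=
    squeeze_zero_norm key tendsto_one_div_add_atTop_nhds_zero_nat
  have h1 : Tendsto (fun n : ℕ => (harmonic n : ℝ) - Real.log ((n:ℝ)+1)) atTop
      (𝓝 Real.eulerMascheroniConstant) := Real.tendsto_harmonic_sub_log_add_one
  have h2 : Tendsto (fun n : ℕ => (harmonic n : ℝ) - Real.log ((n:ℝ)+1)) atTop (𝓝 (F 1 - 0)) := by
    have := (tendsto_const_nhds (x := F 1) (f := atTop (α := ℕ))).sub h0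
    simpa using this
  rw [sub_zero] at h2
  exact (tendsto_nhds_unique h1 h2).symm

lemma F_nat (n : ℕ) : F ((n:ℝ)+1) = Real.eulerMascheroniConstant - (harmonic n : ℝ) := by
  induction n with
  | zero => simpa using F_one_eq_gamma
  | succ m ih =>
      have hm : (0:ℝ) < (m:ℝ)+1 := by positivity
      have := F_succ hm
      rw [ih] at this
      rw [show ((m+1:ℕ):ℝ)+1 = ((m:ℝ)+1)+1 by push_cast; ring, this, harmonic_succ]
      push_cast
      ring

lemma main0 {a : ℝ} (ha : 0 < a) (ha1 : a ≤ 1) : F a = -psi a := by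
  have hD : ∀ n : ℕ, F (a + n) + psi (a + n) = F a + psi a := by
    intro n
    induction n with
    | zero => norm_num
    | succ m ih =>
        have hm : (0:ℝ) < a + m := by positivity
        have h1 : a + ((m:ℝ)+1) = (a + m) + 1 := by ring
        rw [show ((m+1:ℕ):ℝ) = (m:ℝ)+1 by push_cast; ring, h1, F_succ hm, psi_rec hm]
        linarith [ih]
  have hbound : ∀ m : ℕ, |F a + psi a| ≤ 1/((m:ℝ)+1) := by
    intro m
    have hm1 : (0:ℝ) < (m:ℝ)+1 := by positivity
    have hup : F (a + ((m:ℕ):ℝ) + 1) ≤ F ((m:ℝ)+1) := by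
      apply F_anti hm1; linarith
    have hlow : F (((m:ℝ)+1)+1) ≤ F (a + (m:ℝ) + 1) := by
      apply F_anti (by positivity); linarith
    have hpup : psi (a + (m:ℝ) + 1) ≤ psi (((m:ℝ)+1)+1) := by
      apply psi_mono (by positivity); linarith
    have hplow : psi ((m:ℝ)+1) ≤ psi (a + (m:ℝ) + 1) := by
      apply psi_mono hm1; linarith
    have e1 : F ((m:ℝ)+1) = Real.eulerMascheroniConstant - (harmonic m : ℝ) := F_nat m
    have e2 : F (((m:ℝ)+1)+1) = Real.eulerMascheroniConstant - (harmonic (m+1) : ℝ) := by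
      have := F_nat (m+1); push_cast at this ⊢; linarith [this]
    have e3 : psi ((m:ℝ)+1) = -Real.eulerMascheroniConstant + (harmonic m : ℝ) := psi_nat m
    have e4 : psi (((m:ℝ)+1)+1) = -Real.eulerMascheroniConstant + (harmonic (m+1) : ℝ) := by
      have := psi_nat (m+1); push_cast at this ⊢; linarith [this]
    have hh : (harmonic (m+1) : ℝ) = (harmonic m : ℝ) + 1/((m:ℝ)+1) := by
      rw [harmonic_succ]; push_cast; ring
    have hDm := hD (m+1)
    rw [show ((m+1:ℕ):ℝ) = (m:ℝ)+1 by push_cast; ring] at hDm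
    have haux : a + ((m:ℝ)+1) = a + (m:ℝ) + 1 := by ring
    rw [haux] at hDm
    rw [abs_le]
    constructor
    · rw [← hDm]; rw [e2] at hlow; rw [e3] at hplow; rw [hh] at hlow; linarith
    · rw [← hDm]
      rw [e1] at hup
      · rw [e4, hh] at hpup
        have : F (a + (m:ℝ) + 1) ≤ Real.eulerMascheroniConstant - (harmonic m : ℝ) := by
          have := hup
          rw [show a + ((m:ℕ):ℝ) + 1 = a + (m:ℝ) + 1 by norm_num] at this
          exact this
        linarith
  have habs : |F a + psi a| ≤ 0 := by
    apply ge_of_tendsto' tendsto_one_div_add_atTop_nhds_zero_nat hbound |>.trans_eq rfl |> fun _ => ?_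
    exact ge_of_tendsto' tendsto_one_div_add_atTop_nhds_zero_nat (fun m => hbound m)
  have : F a + psi a = 0 := abs_eq_zero.mp (le_antisymm habs (abs_nonneg _))
  linarith

lemma main_shift : ∀ n : ℕ, ∀ a : ℝ, 0 < a → a ≤ 1 → F (a + n) = -psi (a + n) := by
  intro n
  induction n with
  | zero => intro a ha ha1; simpa using main0 ha ha1
  | succ m ih =>
      intro a ha ha1
      have hm : (0:ℝ) < a + m := by positivity
      have h1 : a + ((m+1:ℕ):ℝ) = (a + m) + 1 := by push_cast; ring
      rw [h1, F_succ hm, psi_rec hm, ih a ha ha1]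
      ring

lemma main {a : ℝ} (ha : 0 < a) : F a = -psi a := by
  rcases le_or_gt a 1 with h1 | h1
  · exact main0 ha h1
  · set m := ⌈a⌉₊ with hm
    have hm1 : 1 ≤ m := Nat.one_le_ceil_iff.mpr (by linarith)
    have hma : a ≤ m := Nat.le_ceil a
    have hma2 : (m:ℝ) < a + 1 := Nat.ceil_lt_add_one (by linarith)
    set a₀ := a - ((m-1:ℕ):ℝ) with ha₀
    have hcast : ((m-1:ℕ):ℝ) = (m:ℝ) - 1 := by
      push_cast [Nat.cast_sub hm1]; ring
    have h0 : 0 < a₀ := by rw [ha₀, hcast]; linarith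
    have h2 : a₀ ≤ 1 := by rw [ha₀, hcast]; linarith
    have := main_shift (m-1) a₀ h0 h2
    rw [show a₀ + ((m-1:ℕ):ℝ) = a by rw [ha₀]; ring] at this
    exact this

end GaussDigammaAux

open GaussDigammaAux

theorem integral_inv_log_add_rpow_div_one_sub (a : ℝ) (ha : 0 < a) :
    ∫ t in (0 : ℝ)..1, (1 / Real.log t + t ^ (a - 1) / (1 - t)) = -digamma a := by
  rw [digamma_eq ha]
  exact main ha
end
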